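/- Let M be a model of T_cas and let B ⊆ I^M be such that |B ∩ I_n^M| ≤ n for every n < ω. Let p_B be the set of formulas {P(x)} ∪ {x ≠ a : a ∈ P^M} ∪ {R(x,b) : b ∈ B} ∪ {¬R(x,b) : b ∈ I^M \ B}. Then p_B is finitely satisfiable in M and has a unique extension to a complete 1-type over M. Moreover, every nonalgebraic complete 1-type over M containing P(x) is obtained this way from a unique such B. -/

import Mathlib

open FirstOrder FirstOrder.Language Cardinal

/-- Unary relation symbols of the Casanovas language: `P`, `I`, and `I_n` for `n < ω`. -/
inductive CasRel1 : Type
  | P : CasRel1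
  | I : CasRel1
  | In (n : ℕ) : CasRel1

/-- The Casanovas language: unary symbols `P`, `I`, `I_n (n < ω)` and a binary symbol `R`. -/
def Lcas : FirstOrder.Language :=
  ⟨fun _ => Empty, fun n => match n with
    | 1 => CasRel1
    | 2 => Unit
    | _ => Empty⟩

variable (M : Type u) [Lcas.Structure M]

/-- The interpretation of `P` in `M`. -/
def PM : Set M := {x | Structure.RelMap (L := Lcas) (n := 1) (CasRel1.P : Lcas.Relations 1) ![x]}

/-- The interpretation of `I` in `M`. -/
def IM : Set M := {x | Structure.RelMap (L := Lcas) (n := 1) (CasRel1.I : Lcas.Relations 1) ![x]}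

/-- The interpretation of `I_n` in `M`. -/
def InM (n : ℕ) : Set M := {x | Structure.RelMap (L := Lcas) (n := 1) (CasRel1.In n : Lcas.Relations 1) ![x]}

/-- The interpretation of `R` in `M`. -/
def RM (x y : M) : Prop := Structure.RelMap (L := Lcas) (n := 2) (Unit.unit : Lcas.Relations 2) ![x, y]

/-- `M` is a model of `T_cas`. -/
structure IsTcasModel : Prop where
  part : ∀ x : M, x ∈ PM M ↔ x ∉ IM M
  P_inf : (PM M).Infinite
  I_inf : (IM M).Infinite
  In_sub : ∀ n : ℕ, InM M n ⊆ IM M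
  In_inf : ∀ n : ℕ, (InM M n).Infinite
  In_disj : ∀ m n : ℕ, m ≠ n → Disjoint (InM M m) (InM M n)
  R_sub : ∀ x y : M, RM M x y → x ∈ PM M ∧ y ∈ IM M
  R_count : ∀ a ∈ PM M, ∀ n : ℕ, ∃ s : Finset M, s.card = n ∧
    ∀ b : M, b ∈ s ↔ b ∈ InM M n ∧ RM M a b
  ext_P : ∀ B₀ B₁ : Finset M, ↑B₀ ⊆ IM M → ↑B₁ ⊆ IM M → Disjoint B₀ B₁ →
    (∀ n : ℕ, ((B₁ : Set M) ∩ InM M n).ncard ≤ n) →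
    ∃ a ∈ PM M, (∀ b ∈ B₁, RM M a b) ∧ ∀ b ∈ B₀, ¬ RM M a b
  ext_I : ∀ A₀ A₁ : Finset M, ↑A₀ ⊆ PM M → ↑A₁ ⊆ PM M → Disjoint A₀ A₁ →
    ∃ b ∈ IM M, (∀ a ∈ A₁, RM M a b) ∧ ∀ a ∈ A₀, ¬ RM M a b

/-- The formula `P(x)`, with free variable `Sum.inr 0` and parameters from `M`. -/
def fP : Lcas.Formula (M ⊕ Fin 1) :=
  Relations.formula₁ (CasRel1.P : Lcas.Relations 1) (Term.var (Sum.inr 0))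

/-- The formula `I(x)`. -/
def fI : Lcas.Formula (M ⊕ Fin 1) :=
  Relations.formula₁ (CasRel1.I : Lcas.Relations 1) (Term.var (Sum.inr 0))

/-- The formula `I_n(x)`. -/
def fIn (n : ℕ) : Lcas.Formula (M ⊕ Fin 1) :=
  Relations.formula₁ (CasRel1.In n : Lcas.Relations 1) (Term.var (Sum.inr 0))

variable {M}

/-- The formula `R(a, x)`, for a parameter `a : M`. -/
def fRleft (a : M) : Lcas.Formula (M ⊕ Fin 1) :=
  Relations.formula₂ (Unit.unit : Lcas.Relations 2) (Term.var (Sum.inl a)) (Term.var (Sum.inr 0))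

/-- The formula `R(x, b)`, for a parameter `b : M`. -/
def fRright (b : M) : Lcas.Formula (M ⊕ Fin 1) :=
  Relations.formula₂ (Unit.unit : Lcas.Relations 2) (Term.var (Sum.inr 0)) (Term.var (Sum.inl b))

/-- The formula `x ≠ b`, for a parameter `b : M`. -/
def fNe (b : M) : Lcas.Formula (M ⊕ Fin 1) :=
  (Term.equal (Term.var (Sum.inr 0)) (Term.var (Sum.inl b))).not

variable (M)

/-- `a` realizes the formula `φ` (with parameters from `M` and one free variable). -/
def RealizesAt (φ : Lcas.Formula (M ⊕ Fin 1)) (a : M) : Prop :=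
  φ.Realize (Sum.elim id fun _ => a)

/-- Every finite subset of `p` is satisfiable in `M`. -/
def FinSatIn (p : Set (Lcas.Formula (M ⊕ Fin 1))) : Prop :=
  ∀ s : Finset (Lcas.Formula (M ⊕ Fin 1)), ↑s ⊆ p → ∃ a : M, ∀ φ ∈ s, RealizesAt M φ a

/-- `p` is a complete 1-type over `M`: a maximal finitely satisfiable set of formulas in one
free variable with parameters from `M`. -/
def IsCompleteTypeOver (p : Set (Lcas.Formula (M ⊕ Fin 1))) : Prop :=
  FinSatIn M p ∧ ∀ q : Set (Lcas.Formula (M ⊕ Fin 1)), FinSatIn M q → p ⊆ q → q = p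

/-- `p` is nonalgebraic: it contains `x ≠ b` for every `b : M`. -/
def IsNonalgebraic (p : Set (Lcas.Formula (M ⊕ Fin 1))) : Prop :=
  ∀ b : M, fNe b ∈ p


variable {M} in
/-- The partial type `p_B` over `M`, for `B ⊆ I^M`: it contains `P(x)`, `x ≠ a` for all
`a ∈ P^M`, `R(x,b)` for `b ∈ B`, and `¬R(x,b)` for `b ∈ I^M \ B`. -/
def typeB (B : Set M) : Set (Lcas.Formula (M ⊕ Fin 1)) :=
  {fP M} ∪ {φ | ∃ a ∈ PM M, φ = fNe a} ∪ {φ | ∃ b ∈ B, φ = fRright b} ∪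
    {φ | ∃ b ∈ IM M \ B, φ = (fRright b).not}

section SecA
open scoped Classical

variable {M : Type u} [Lcas.Structure M]

lemma term_is_var {β : Type*} (t : Lcas.Term β) : ∃ i, t = Term.var i := by
  cases t with
  | var i => exact ⟨i, rfl⟩
  | func f ts => exact (f : Empty).elim

@[simp] lemma realizesAt_fP {a : M} : RealizesAt M (fP M) a ↔ a ∈ PM M := by
  exact Formula.realize_rel₁

@[simp] lemma realizesAt_fNe {a b : M} : RealizesAt M (fNe b) a ↔ a ≠ b := by
  simp [RealizesAt, fNe, Term.equal, Formula.Realize]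

@[simp] lemma realizesAt_fRright {a b : M} : RealizesAt M (fRright b) a ↔ RM M a b := by
  exact Formula.realize_rel₂

@[simp] lemma realizesAt_not {φ : Lcas.Formula (M ⊕ Fin 1)} {a : M} :
    RealizesAt M φ.not a ↔ ¬ RealizesAt M φ a := by
  simp [RealizesAt]

end SecA
section SecB
open scoped Classical

variable {M : Type u} [Lcas.Structure M]

lemma notP_of_I (hM : IsTcasModel M) {x : M} (h : x ∈ IM M) : x ∉ PM M := by
  intro hp; exact (hM.part x).1 hp h

lemma notI_of_P (hM : IsTcasModel M) {x : M} (h : x ∈ PM M) : x ∉ IM M :=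
  (hM.part x).1 h

lemma I_of_notP (hM : IsTcasModel M) {x : M} (h : x ∉ PM M) : x ∈ IM M := by
  by_contra hI; exact h ((hM.part x).2 hI)

lemma notR_of_I_left (hM : IsTcasModel M) {x y : M} (h : x ∈ IM M) : ¬ RM M x y := by
  intro hr; exact notP_of_I hM h (hM.R_sub x y hr).1

lemma notR_right_P (hM : IsTcasModel M) {x y : M} (h : y ∈ PM M) : ¬ RM M x y := by
  intro hr; exact notI_of_P hM h (hM.R_sub x y hr).2

lemma notIn_of_P (hM : IsTcasModel M) {x : M} (h : x ∈ PM M) (n : ℕ) : x ∉ InM M n := by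
  intro hx; exact notI_of_P hM h (hM.In_sub n hx)

lemma In_unique (hM : IsTcasModel M) {x : M} {m n : ℕ} (hm : x ∈ InM M m) (hn : x ∈ InM M n) :
    m = n := by
  by_contra hne
  exact Set.disjoint_left.1 (hM.In_disj m n hne) hm hn

lemma notIn_zero_of_R (hM : IsTcasModel M) {a d : M} (ha : a ∈ PM M) (h : RM M a d) :
    d ∉ InM M 0 := by
  intro hd
  obtain ⟨s, hcard, hmem⟩ := hM.R_count a ha 0
  have : d ∈ s := (hmem d).2 ⟨hd, h⟩
  rw [Finset.card_eq_zero.1 hcard] at this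
  exact absurd this (Finset.notMem_empty d)

/-- There is an element of `P` unrelated to everything in a finite subset of `I`. -/
lemma exists_P_avoid (hM : IsTcasModel M) (B₀ : Finset M) (h : ↑B₀ ⊆ IM M) :
    ∃ a ∈ PM M, ∀ b ∈ B₀, ¬ RM M a b := by
  obtain ⟨a, ha, -, h0⟩ := hM.ext_P B₀ ∅ h (by simp) (by simp) (by simp)
  exact ⟨a, ha, h0⟩

/-- There is an element of `I ∖ I₀` related to everything in a finite `A ⊆ P` and avoiding a
finite set `B ⊆ I`. -/
lemma exists_bstar (hM : IsTcasModel M) (A : Finset M) (hA : ↑A ⊆ PM M)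
    (B : Finset M) (hB : ↑B ⊆ IM M) :
    ∃ b ∈ IM M, b ∉ B ∧ b ∉ InM M 0 ∧ ∀ a ∈ A, RM M a b := by
  obtain ⟨a₀, ha₀, ha₀B⟩ := exists_P_avoid hM B hB
  obtain ⟨b, hbI, hb1, -⟩ := hM.ext_I ∅ (insert a₀ A) (by simp)
    (by rw [Finset.coe_insert]; exact Set.insert_subset ha₀ hA) (by simp)
  have hra₀ : RM M a₀ b := hb1 a₀ (Finset.mem_insert_self _ _)
  exact ⟨b, hbI, fun hbB => ha₀B b hbB hra₀, notIn_zero_of_R hM ha₀ hra₀, fun a haA =>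
    hb1 a (Finset.mem_insert_of_mem haA)⟩

/-- Many distinct elements of `I` with a prescribed `R`-pattern (all related to a helper `a₀`). -/
lemma exists_many_I (hM : IsTcasModel M) (A₁ A₀ : Finset M) (h₁ : ↑A₁ ⊆ PM M)
    (h₀ : ↑A₀ ⊆ PM M) (hd : ∀ a ∈ A₁, a ∉ A₀) {a₀ : M} (ha₀ : a₀ ∈ PM M) (ha₀n : a₀ ∉ A₀)
    (t : ℕ) :
    ∃ D : Finset M, D.card = t ∧ ↑D ⊆ IM M ∧ ∀ d ∈ D, RM M a₀ d ∧
      (∀ a ∈ A₁, RM M a d) ∧ (∀ a ∈ A₀, ¬ RM M a d) := by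
  induction t with
  | zero => exact ⟨∅, by simp⟩
  | succ t ih =>
    obtain ⟨D, hcard, hDI, hDpat⟩ := ih
    -- a helper `a⁺ ∈ P` outside `A₀ ∪ {a₀}`
    obtain ⟨ap, hap⟩ := (hM.P_inf.diff (insert a₀ A₀).finite_toSet).nonempty
    obtain ⟨hapP, hapn⟩ := hap
    rw [Finset.coe_insert, Set.mem_insert_iff] at hapn
    push_neg at hapn
    -- `b̂ ∈ I` with `R(a⁺, b̂)` and `¬R(a, b̂)` for `a ∈ A₀ ∪ {a₀}`
    obtain ⟨bh, hbhI, hbh1, hbh0⟩ := hM.ext_I (insert a₀ A₀) {ap}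
      (by rw [Finset.coe_insert]; exact Set.insert_subset ha₀ h₀)
      (by simpa using hapP)
      (by
        rw [Finset.disjoint_left]
        intro a ha hb
        rw [Finset.mem_singleton] at hb
        subst hb
        rcases Finset.mem_insert.1 ha with h | h
        · exact hapn.1 h
        · exact hapn.2 h)
    have hbhap : RM M ap bh := hbh1 ap (Finset.mem_singleton_self _)
    have hbha₀ : ¬ RM M a₀ bh := hbh0 a₀ (Finset.mem_insert_self _ _)
    have hbhD : bh ∉ D := fun h => hbha₀ (hDpat bh h).1
    -- `a* ∈ P` with `R(a*, b̂)` and `¬R(a*, d)` for `d ∈ D`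
    obtain ⟨as, hasP, has1, has0⟩ := hM.ext_P D {bh} hDI (by simpa using hbhI)
      (by simp [Finset.disjoint_right, hbhD])
      (by
        intro n
        rcases Nat.eq_zero_or_pos n with h0 | hpos
        · subst h0
          have he : ((({bh} : Finset M) : Set M) ∩ InM M 0) = ∅ := by
            apply Set.eq_empty_of_forall_notMem
            rintro x ⟨hx, hx0⟩
            rw [Finset.coe_singleton, Set.mem_singleton_iff] at hx
            exact notIn_zero_of_R hM hapP hbhap (hx ▸ hx0)
          rw [he, Set.ncard_empty]
        · have h1 : ((({bh} : Finset M) : Set M) ∩ InM M n).ncard ≤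
              (({bh} : Finset M) : Set M).ncard :=
            Set.ncard_le_ncard Set.inter_subset_left
              (Set.Finite.subset (Set.finite_singleton bh) (by simp))
          have h2 : (({bh} : Finset M) : Set M).ncard = 1 := by simp
          omega)
    have hasbh : RM M as bh := has1 bh (Finset.mem_singleton_self _)
    have hasA₀ : as ∉ A₀ := fun h => hbh0 as (Finset.mem_insert_of_mem h) hasbh
    have hasa₀ : as ≠ a₀ := fun h => hbha₀ (h ▸ hasbh)
    -- the new element
    obtain ⟨d, hdI, hd1, hd0⟩ := hM.ext_I A₀ (insert a₀ (insert as A₁))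
      h₀
      (by
        rw [Finset.coe_insert, Finset.coe_insert]
        exact Set.insert_subset ha₀ (Set.insert_subset hasP h₁))
      (by
        rw [Finset.disjoint_left]
        intro a haA₀ hmem
        rcases Finset.mem_insert.1 hmem with h | h
        · exact ha₀n (h ▸ haA₀)
        rcases Finset.mem_insert.1 h with h' | h'
        · exact hasA₀ (h' ▸ haA₀)
        · exact hd a h' haA₀)
    have hdas : RM M as d := hd1 as (Finset.mem_insert_of_mem (Finset.mem_insert_self _ _))
    have hdD : d ∉ D := fun h => has0 d h hdas
    refine ⟨insert d D, by rw [Finset.card_insert_of_notMem hdD, hcard],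
      by rw [Finset.coe_insert]; exact Set.insert_subset hdI hDI, ?_⟩
    intro x hx
    rcases Finset.mem_insert.1 hx with h | h
    · subst h
      exact ⟨hd1 a₀ (Finset.mem_insert_self _ _),
        fun a ha => hd1 a (Finset.mem_insert_of_mem (Finset.mem_insert_of_mem ha)), hd0⟩
    · exact hDpat x h

end SecB
section SecC1
open scoped Classical

variable {M : Type u} [Lcas.Structure M]

/-- A fresh element of `I` avoiding all `I_n` for `n ≤ T`, with a prescribed `R`-pattern,
avoiding a finite set `F`. -/
lemma exists_fresh_I (hM : IsTcasModel M) (A₁ A₀ : Finset M) (h₁ : ↑A₁ ⊆ PM M)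
    (h₀ : ↑A₀ ⊆ PM M) (hd : ∀ a ∈ A₁, a ∉ A₀) (T : ℕ) (F : Finset M) :
    ∃ d ∈ IM M, (∀ n, n ≤ T → d ∉ InM M n) ∧ (∀ a ∈ A₁, RM M a d) ∧
      (∀ a ∈ A₀, ¬ RM M a d) ∧ d ∉ F := by
  obtain ⟨a₀, ha₀P, ha₀n⟩ := (hM.P_inf.diff A₀.finite_toSet).nonempty
  obtain ⟨D, hcard, hDI, hDpat⟩ := exists_many_I hM A₁ A₀ h₁ h₀ hd ha₀P
    (fun h => ha₀n (by exact_mod_cast h))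
    ((∑ n ∈ Finset.range (T+1), n) + F.card + 1)
  choose nb hnb1 hnb2 using hM.R_count a₀ ha₀P
  set Bad : Finset M := F ∪ (Finset.range (T+1)).biUnion nb with hBad
  have hsub : ¬ (D ⊆ Bad) := by
    intro hsub
    have h1 : D.card ≤ Bad.card := Finset.card_le_card hsub
    have h2 : Bad.card ≤ F.card + ∑ n ∈ Finset.range (T+1), n := by
      calc Bad.card ≤ F.card + ((Finset.range (T+1)).biUnion nb).card :=
            Finset.card_union_le _ _
        _ ≤ F.card + ∑ n ∈ Finset.range (T+1), (nb n).card :=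
            Nat.add_le_add_left (Finset.card_biUnion_le) _
        _ = F.card + ∑ n ∈ Finset.range (T+1), n := by
            congr 1; exact Finset.sum_congr rfl fun n _ => hnb1 n
    omega
  obtain ⟨d, hdD, hdBad⟩ := Finset.not_subset.1 hsub
  obtain ⟨hra₀, hr1, hr0⟩ := hDpat d hdD
  refine ⟨d, hDI hdD, ?_, hr1, hr0, ?_⟩
  · intro n hn hdn
    apply hdBad
    rw [hBad, Finset.mem_union]
    right
    exact Finset.mem_biUnion.2 ⟨n, Finset.mem_range.2 (by omega), (hnb2 n d).2 ⟨hdn, hra₀⟩⟩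
  · intro hdF
    exact hdBad (Finset.mem_union.2 (Or.inl hdF))

/-- A pairing (bijection as a set of pairs) between two equinumerous finsets. -/
lemma exists_pairing {α : Type*} (s t : Finset α) (h : s.card = t.card) :
    ∃ S : Finset (α × α), (∀ p ∈ S, p.1 ∈ s ∧ p.2 ∈ t) ∧
      (∀ x ∈ s, ∃ y, (x, y) ∈ S) ∧ (∀ y ∈ t, ∃ x, (x, y) ∈ S) ∧
      (∀ x y y', (x, y) ∈ S → (x, y') ∈ S → y = y') ∧
      (∀ x x' y, (x, y) ∈ S → (x', y) ∈ S → x = x') := by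
  classical
  have e : {x // x ∈ s} ≃ {y // y ∈ t} := s.equivFin.trans ((finCongr h).trans t.equivFin.symm)
  refine ⟨s.attach.image (fun x => (x.1, (e x).1)), ?_, ?_, ?_, ?_, ?_⟩
  · intro p hp
    obtain ⟨x, -, hx⟩ := Finset.mem_image.1 hp
    exact hx ▸ ⟨x.2, (e x).2⟩
  · intro x hx
    exact ⟨(e ⟨x, hx⟩).1, Finset.mem_image.2 ⟨⟨x, hx⟩, Finset.mem_attach _ _, rfl⟩⟩
  · intro y hy
    refine ⟨(e.symm ⟨y, hy⟩).1, Finset.mem_image.2 ⟨e.symm ⟨y, hy⟩, Finset.mem_attach _ _, ?_⟩⟩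
    simp
  · intro x y y' hxy hxy'
    obtain ⟨a, -, ha⟩ := Finset.mem_image.1 hxy
    obtain ⟨b, -, hb⟩ := Finset.mem_image.1 hxy'
    have hab : a = b := Subtype.ext (by
      have h1 := congrArg Prod.fst ha
      have h2 := congrArg Prod.fst hb
      simp only [Prod.fst] at h1 h2
      rw [h1, h2])
    subst hab
    have h1 := congrArg Prod.snd ha
    have h2 := congrArg Prod.snd hb
    simp only [Prod.snd] at h1 h2
    rw [← h1, h2]
  · intro x x' y hxy hx'y
    obtain ⟨a, -, ha⟩ := Finset.mem_image.1 hxy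
    obtain ⟨b, -, hb⟩ := Finset.mem_image.1 hx'y
    have hab : (e a).1 = (e b).1 := by
      have h1 := congrArg Prod.snd ha
      have h2 := congrArg Prod.snd hb
      simp only [Prod.snd] at h1 h2
      rw [h1, h2]
    have hab' : a = b := e.injective (Subtype.ext hab)
    subst hab'
    have h1 := congrArg Prod.fst ha
    have h2 := congrArg Prod.fst hb
    simp only [Prod.fst] at h1 h2
    rw [← h1, h2]

end SecC1
section SecC2
open scoped Classical

variable {M : Type u} [Lcas.Structure M]

/-- The (finite) set of `R`-neighbours of `y` in `I_n`. -/
noncomputable def nbF (hM : IsTcasModel M) (y : M) (n : ℕ) : Finset M :=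
  if h : y ∈ PM M then (hM.R_count y h n).choose else ∅

lemma nbF_card (hM : IsTcasModel M) {y : M} (hy : y ∈ PM M) (n : ℕ) :
    (nbF hM y n).card = n := by
  rw [nbF, dif_pos hy]; exact (hM.R_count y hy n).choose_spec.1

lemma mem_nbF (hM : IsTcasModel M) {y : M} (hy : y ∈ PM M) {n : ℕ} {b : M} :
    b ∈ nbF hM y n ↔ b ∈ InM M n ∧ RM M y b := by
  rw [nbF, dif_pos hy]; exact (hM.R_count y hy n).choose_spec.2 b

variable (M) in
/-- A finite partial isomorphism (with witness-closure up to level `K` and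
high-level slack `j`). -/
structure Good (K j : ℕ) (G : Finset (M × M)) : Prop where
  func : ∀ ⦃x y y'⦄, (x, y) ∈ G → (x, y') ∈ G → y = y'
  inj : ∀ ⦃x x' y⦄, (x, y) ∈ G → (x', y) ∈ G → x = x'
  presP : ∀ ⦃x y⦄, (x, y) ∈ G → (x ∈ PM M ↔ y ∈ PM M)
  presIn : ∀ n, n ≤ K → ∀ ⦃x y⦄, (x, y) ∈ G → (x ∈ InM M n ↔ y ∈ InM M n)
  presR : ∀ ⦃x y x' y'⦄, (x, y) ∈ G → (x', y') ∈ G → (RM M x x' ↔ RM M y y')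
  closL : ∀ ⦃x y⦄, (x, y) ∈ G → x ∈ PM M → ∀ n, n ≤ K → ∀ w, w ∈ InM M n → RM M x w →
    ∃ w', (w, w') ∈ G
  closR : ∀ ⦃x y⦄, (x, y) ∈ G → y ∈ PM M → ∀ n, n ≤ K → ∀ w, w ∈ InM M n → RM M y w →
    ∃ w', (w', w) ∈ G
  highL : ∀ n, K < n → (G.filter (fun p => p.1 ∈ InM M n)).card + j ≤ n
  highR : ∀ n, K < n → (G.filter (fun p => p.2 ∈ InM M n)).card + j ≤ n

lemma Good.mono {K j j' : ℕ} {G : Finset (M × M)} (h : Good M K j G) (hj : j' ≤ j) :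
    Good M K j' G where
  func := h.func
  inj := h.inj
  presP := h.presP
  presIn := h.presIn
  presR := h.presR
  closL := h.closL
  closR := h.closR
  highL := fun n hn => le_trans (by omega) (h.highL n hn)
  highR := fun n hn => le_trans (by omega) (h.highR n hn)

lemma mem_swap {G : Finset (M × M)} {x y : M} :
    (x, y) ∈ G.image Prod.swap ↔ (y, x) ∈ G := by
  constructor
  · intro h
    obtain ⟨p, hp, he⟩ := Finset.mem_image.1 h
    have h1 : p.2 = x := congrArg Prod.fst he
    have h2 : p.1 = y := congrArg Prod.snd he
    rw [← h1, ← h2]; exact hp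
  · intro h
    exact Finset.mem_image.2 ⟨(y, x), h, rfl⟩

lemma Good.swap {K j : ℕ} {G : Finset (M × M)} (h : Good M K j G) :
    Good M K j (G.image Prod.swap) where
  func := fun x y y' h1 h2 => h.inj (mem_swap.1 h1) (mem_swap.1 h2)
  inj := fun x x' y h1 h2 => h.func (mem_swap.1 h1) (mem_swap.1 h2)
  presP := fun x y h1 => (h.presP (mem_swap.1 h1)).symm
  presIn := fun n hn x y h1 => (h.presIn n hn (mem_swap.1 h1)).symm
  presR := fun x y x' y' h1 h2 => (h.presR (mem_swap.1 h1) (mem_swap.1 h2)).symm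
  closL := fun x y h1 hx n hn w hw hr => by
    obtain ⟨w', hw'⟩ := h.closR (mem_swap.1 h1) hx n hn w hw hr
    exact ⟨w', mem_swap.2 hw'⟩
  closR := fun x y h1 hy n hn w hw hr => by
    obtain ⟨w', hw'⟩ := h.closL (mem_swap.1 h1) hy n hn w hw hr
    exact ⟨w', mem_swap.2 hw'⟩
  highL := fun n hn => by
    refine le_trans (Nat.add_le_add_right (Finset.card_le_card_of_injOn Prod.swap ?_ ?_) j)
      (h.highR n hn)
    · intro p hp
      rw [Finset.mem_coe, Finset.mem_filter] at hp ⊢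
      obtain ⟨hp1, hp2⟩ := hp
      refine ⟨?_, hp2⟩
      obtain ⟨q, hq, he⟩ := Finset.mem_image.1 hp1
      rw [← he]; exact (mem_swap.1 (he ▸ hp1))
    · intro p _ q _ hpq
      exact Prod.ext (congrArg Prod.snd hpq) (congrArg Prod.fst hpq)
  highR := fun n hn => by
    refine le_trans (Nat.add_le_add_right (Finset.card_le_card_of_injOn Prod.swap ?_ ?_) j)
      (h.highL n hn)
    · intro p hp
      rw [Finset.mem_coe, Finset.mem_filter] at hp ⊢
      obtain ⟨hp1, hp2⟩ := hp
      exact ⟨mem_swap.1 hp1, hp2⟩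
    · intro p _ q _ hpq
      exact Prod.ext (congrArg Prod.snd hpq) (congrArg Prod.fst hpq)

lemma swap_swap (G : Finset (M × M)) : (G.image Prod.swap).image Prod.swap = G := by
  ext p
  constructor
  · intro h
    obtain ⟨q, hq, he⟩ := Finset.mem_image.1 h
    obtain ⟨r, hr, he'⟩ := Finset.mem_image.1 hq
    rw [← he, ← he', Prod.swap_swap]; exact hr
  · intro h
    exact Finset.mem_image.2 ⟨p.swap, Finset.mem_image.2 ⟨p, h, rfl⟩, Prod.swap_swap p⟩

/-- Membership of the left coordinate in the domain. -/
def memDom (G : Finset (M × M)) (x : M) : Prop := ∃ y, (x, y) ∈ G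

lemma Good.presI (hM : IsTcasModel M) {K j : ℕ} {G : Finset (M × M)} (h : Good M K j G)
    {x y : M} (hxy : (x, y) ∈ G) : x ∈ IM M ↔ y ∈ IM M := by
  constructor
  · intro hx
    exact I_of_notP hM (fun hy => notP_of_I hM hx ((h.presP hxy).2 hy))
  · intro hy
    exact I_of_notP hM (fun hx => notP_of_I hM hy ((h.presP hxy).1 hx))

end SecC2
section SecC3
open scoped Classical

variable {M : Type u} [Lcas.Structure M]

lemma pair_eq {α β : Type*} {a c : α} {b d : β} (h : (a, b) = (c, d)) : a = c ∧ b = d :=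
  ⟨congrArg Prod.fst h, congrArg Prod.snd h⟩

/-- Extension of a partial isomorphism by a new low-level element of `I`. -/
lemma extend_I_low (hM : IsTcasModel M) {K j : ℕ} {G : Finset (M × M)}
    (hG : Good M K (j + 1) G) {c : M} (hc : ∀ y, (c, y) ∉ G) {n₀ : ℕ} (hn₀ : n₀ ≤ K)
    (hcn : c ∈ InM M n₀) :
    ∃ d G', G ⊆ G' ∧ (c, d) ∈ G' ∧ Good M K j G' := by
  have hcI : c ∈ IM M := hM.In_sub n₀ hcn
  have hcP : c ∉ PM M := notP_of_I hM hcI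
  -- no `P`-element of the domain is related to `c`
  have hnoR : ∀ ⦃x y⦄, (x, y) ∈ G → x ∈ PM M → ¬ RM M x c := by
    intro x y hxy hx hr
    obtain ⟨w', hw'⟩ := hG.closL hxy hx n₀ hn₀ c hcn hr
    exact hc w' hw'
  -- exclusion set for the choice of `d`
  set Ex : Finset M := (G.image Prod.snd) ∪
    (G.image Prod.snd).biUnion (fun y => nbF hM y n₀) with hEx
  obtain ⟨d, hdn, hdEx⟩ := ((hM.In_inf n₀).diff Ex.finite_toSet).nonempty
  have hdI : d ∈ IM M := hM.In_sub n₀ hdn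
  have hdrng : ∀ x y, (x, y) ∈ G → y ≠ d := by
    intro x y hxy he
    exact hdEx (Finset.mem_union.2 (Or.inl (Finset.mem_image.2 ⟨(x, y), hxy, he⟩)))
  have hdnoR : ∀ ⦃x y⦄, (x, y) ∈ G → y ∈ PM M → ¬ RM M y d := by
    intro x y hxy hy hr
    apply hdEx
    refine Finset.mem_union.2 (Or.inr (Finset.mem_biUnion.2
      ⟨y, Finset.mem_image.2 ⟨(x, y), hxy, rfl⟩, (mem_nbF hM hy).2 ⟨hdn, hr⟩⟩))
  have hdP : d ∉ PM M := notP_of_I hM hdI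
  refine ⟨d, insert (c, d) G, Finset.subset_insert _ _, Finset.mem_insert_self _ _, ?_⟩
  have memI : ∀ {p : M × M}, p ∈ insert (c, d) G → p = (c, d) ∨ p ∈ G := by
    intro p hp; exact Finset.mem_insert.1 hp
  constructor
  · -- func
    intro x y y' h1 h2
    rcases memI h1 with g1 | g1 <;> rcases memI h2 with g2 | g2
    · obtain ⟨e1, e2⟩ := pair_eq g1
      obtain ⟨e3, e4⟩ := pair_eq g2
      rw [e2, e4]
    · obtain ⟨e1, e2⟩ := pair_eq g1
      subst e1
      exact absurd g2 (hc y')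
    · obtain ⟨e1, e2⟩ := pair_eq g2
      subst e1
      exact absurd g1 (hc y)
    · exact hG.func g1 g2
  · -- inj
    intro x x' y h1 h2
    rcases memI h1 with g1 | g1 <;> rcases memI h2 with g2 | g2
    · obtain ⟨e1, e2⟩ := pair_eq g1
      obtain ⟨e3, e4⟩ := pair_eq g2
      rw [e1, e3]
    · obtain ⟨e1, e2⟩ := pair_eq g1
      subst e2
      exact absurd rfl (hdrng x' y g2)
    · obtain ⟨e1, e2⟩ := pair_eq g2
      subst e2
      exact absurd rfl (hdrng x y g1)
    · exact hG.inj g1 g2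
  · -- presP
    intro x y h1
    rcases memI h1 with g1 | g1
    · obtain ⟨e1, e2⟩ := pair_eq g1
      subst e1; subst e2
      exact iff_of_false hcP hdP
    · exact hG.presP g1
  · -- presIn
    intro n hn x y h1
    rcases memI h1 with g1 | g1
    · obtain ⟨e1, e2⟩ := pair_eq g1
      subst e1; subst e2
      by_cases hnn : n = n₀
      · subst hnn; exact iff_of_true hcn hdn
      · exact iff_of_false (fun h => hnn (In_unique hM h hcn))
          (fun h => hnn (In_unique hM h hdn))
    · exact hG.presIn n hn g1
  · -- presR
    intro x y x' y' h1 h2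
    rcases memI h1 with g1 | g1 <;> rcases memI h2 with g2 | g2
    · obtain ⟨e1, e2⟩ := pair_eq g1
      obtain ⟨e3, e4⟩ := pair_eq g2
      subst e1; subst e2; subst e3; subst e4
      exact iff_of_false (notR_of_I_left hM hcI) (notR_of_I_left hM hdI)
    · obtain ⟨e1, e2⟩ := pair_eq g1
      subst e1; subst e2
      exact iff_of_false (notR_of_I_left hM hcI) (notR_of_I_left hM hdI)
    · obtain ⟨e3, e4⟩ := pair_eq g2
      subst e3; subst e4
      by_cases hx : x ∈ PM M
      · exact iff_of_false (hnoR g1 hx) (hdnoR g1 ((hG.presP g1).1 hx))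
      · exact iff_of_false (notR_of_I_left hM (I_of_notP hM hx))
          (notR_of_I_left hM (I_of_notP hM (fun hy => hx ((hG.presP g1).2 hy))))
    · exact hG.presR g1 g2
  · -- closL
    intro x y h1 hx n hn w hw hr
    rcases memI h1 with g1 | g1
    · obtain ⟨e1, e2⟩ := pair_eq g1
      subst e1
      exact absurd hx hcP
    · obtain ⟨w', hw'⟩ := hG.closL g1 hx n hn w hw hr
      exact ⟨w', Finset.mem_insert_of_mem hw'⟩
  · -- closR
    intro x y h1 hy n hn w hw hr
    rcases memI h1 with g1 | g1
    · obtain ⟨e1, e2⟩ := pair_eq g1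
      subst e2
      exact absurd hy hdP
    · obtain ⟨w', hw'⟩ := hG.closR g1 hy n hn w hw hr
      exact ⟨w', Finset.mem_insert_of_mem hw'⟩
  · -- highL
    intro n hn
    have he : (insert (c, d) G).filter (fun p => p.1 ∈ InM M n) =
        G.filter (fun p => p.1 ∈ InM M n) := by
      rw [Finset.filter_insert, if_neg]
      intro hcn'
      exact absurd (In_unique hM hcn' hcn) (by omega)
    rw [he]
    have := hG.highL n hn
    omega
  · -- highR
    intro n hn
    have he : (insert (c, d) G).filter (fun p => p.2 ∈ InM M n) =
        G.filter (fun p => p.2 ∈ InM M n) := by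
      rw [Finset.filter_insert, if_neg]
      intro hdn'
      exact absurd (In_unique hM hdn' hdn) (by omega)
    rw [he]
    have := hG.highR n hn
    omega

end SecC3
section SecC4
open scoped Classical

variable {M : Type u} [Lcas.Structure M]

/-- Extension by a new element of `I` not in any `I_n` with `n ≤ K`. -/
lemma extend_I_high (hM : IsTcasModel M) {K j : ℕ} {G : Finset (M × M)}
    (hG : Good M K (j + 1) G) (hjK : j + 1 ≤ K) {c : M} (hc : ∀ y, (c, y) ∉ G)
    (hcI : c ∈ IM M) (hch : ∀ n, n ≤ K → c ∉ InM M n) :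
    ∃ d G', G ⊆ G' ∧ (c, d) ∈ G' ∧ Good M K j G' := by
  have hcP : c ∉ PM M := notP_of_I hM hcI
  -- the two pattern sets
  set A₁ : Finset M := (G.filter (fun p => p.1 ∈ PM M ∧ RM M p.1 c)).image Prod.snd with hA₁
  set A₀ : Finset M := (G.filter (fun p => p.1 ∈ PM M ∧ ¬ RM M p.1 c)).image Prod.snd with hA₀
  have hA₁mem : ∀ {y : M}, y ∈ A₁ ↔ ∃ x, (x, y) ∈ G ∧ x ∈ PM M ∧ RM M x c := by
    intro y
    constructor
    · intro h
      obtain ⟨p, hp, he⟩ := Finset.mem_image.1 h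
      obtain ⟨hp1, hp2, hp3⟩ := Finset.mem_filter.1 hp
      exact ⟨p.1, by rw [← he]; exact hp1, hp2, hp3⟩
    · rintro ⟨x, h1, h2, h3⟩
      exact Finset.mem_image.2 ⟨(x, y), Finset.mem_filter.2 ⟨h1, h2, h3⟩, rfl⟩
  have hA₀mem : ∀ {y : M}, y ∈ A₀ ↔ ∃ x, (x, y) ∈ G ∧ x ∈ PM M ∧ ¬ RM M x c := by
    intro y
    constructor
    · intro h
      obtain ⟨p, hp, he⟩ := Finset.mem_image.1 h
      obtain ⟨hp1, hp2, hp3⟩ := Finset.mem_filter.1 hp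
      exact ⟨p.1, by rw [← he]; exact hp1, hp2, hp3⟩
    · rintro ⟨x, h1, h2, h3⟩
      exact Finset.mem_image.2 ⟨(x, y), Finset.mem_filter.2 ⟨h1, h2, h3⟩, rfl⟩
  have hA₁P : ↑A₁ ⊆ PM M := by
    intro y hy
    obtain ⟨x, h1, h2, -⟩ := hA₁mem.1 (by exact_mod_cast hy)
    exact (hG.presP h1).1 h2
  have hA₀P : ↑A₀ ⊆ PM M := by
    intro y hy
    obtain ⟨x, h1, h2, -⟩ := hA₀mem.1 (by exact_mod_cast hy)
    exact (hG.presP h1).1 h2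
  have hdisj : ∀ a ∈ A₁, a ∉ A₀ := by
    intro y h1 h0
    obtain ⟨x1, hx1, hx1P, hx1R⟩ := hA₁mem.1 h1
    obtain ⟨x0, hx0, hx0P, hx0R⟩ := hA₀mem.1 h0
    rw [hG.inj hx1 hx0] at hx1R
    exact hx0R hx1R
  -- a level bound covering all levels present in the range of `G`
  set lvl : M → ℕ := fun y => if h : ∃ n, y ∈ InM M n then h.choose else 0 with hlvl
  have hlvl_spec : ∀ y n, y ∈ InM M n → lvl y = n := by
    intro y n hy
    have hex : ∃ n, y ∈ InM M n := ⟨n, hy⟩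
    rw [hlvl]
    simp only [dif_pos hex]
    exact In_unique hM hex.choose_spec hy
  set T : ℕ := max K ((G.image Prod.snd).sup lvl) with hT
  have hThigh : ∀ y n, (∃ x, (x, y) ∈ G) → y ∈ InM M n → n ≤ T := by
    rintro y n ⟨x, hxy⟩ hyn
    rw [hT]
    refine le_max_of_le_right ?_
    rw [← hlvl_spec y n hyn]
    exact Finset.le_sup (Finset.mem_image.2 ⟨(x, y), hxy, rfl⟩)
  obtain ⟨d, hdI, hdlow, hd1, hd0, hdF⟩ := exists_fresh_I hM A₁ A₀ hA₁P hA₀P hdisj T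
    (G.image Prod.snd)
  have hdP : d ∉ PM M := notP_of_I hM hdI
  have hdrng : ∀ x y, (x, y) ∈ G → y ≠ d := by
    intro x y hxy he
    exact hdF (Finset.mem_image.2 ⟨(x, y), hxy, he⟩)
  refine ⟨d, insert (c, d) G, Finset.subset_insert _ _, Finset.mem_insert_self _ _, ?_⟩
  have memI : ∀ {p : M × M}, p ∈ insert (c, d) G → p = (c, d) ∨ p ∈ G := by
    intro p hp; exact Finset.mem_insert.1 hp
  constructor
  · -- func
    intro x y y' h1 h2
    rcases memI h1 with g1 | g1 <;> rcases memI h2 with g2 | g2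
    · obtain ⟨e1, e2⟩ := pair_eq g1
      obtain ⟨e3, e4⟩ := pair_eq g2
      rw [e2, e4]
    · obtain ⟨e1, e2⟩ := pair_eq g1
      subst e1
      exact absurd g2 (hc y')
    · obtain ⟨e1, e2⟩ := pair_eq g2
      subst e1
      exact absurd g1 (hc y)
    · exact hG.func g1 g2
  · -- inj
    intro x x' y h1 h2
    rcases memI h1 with g1 | g1 <;> rcases memI h2 with g2 | g2
    · obtain ⟨e1, e2⟩ := pair_eq g1
      obtain ⟨e3, e4⟩ := pair_eq g2
      rw [e1, e3]
    · obtain ⟨e1, e2⟩ := pair_eq g1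
      subst e2
      exact absurd rfl (hdrng x' y g2)
    · obtain ⟨e1, e2⟩ := pair_eq g2
      subst e2
      exact absurd rfl (hdrng x y g1)
    · exact hG.inj g1 g2
  · -- presP
    intro x y h1
    rcases memI h1 with g1 | g1
    · obtain ⟨e1, e2⟩ := pair_eq g1
      subst e1; subst e2
      exact iff_of_false hcP hdP
    · exact hG.presP g1
  · -- presIn
    intro n hn x y h1
    rcases memI h1 with g1 | g1
    · obtain ⟨e1, e2⟩ := pair_eq g1
      subst e1; subst e2
      exact iff_of_false (hch n hn) (hdlow n (le_trans hn (le_max_left _ _)))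
    · exact hG.presIn n hn g1
  · -- presR
    intro x y x' y' h1 h2
    rcases memI h1 with g1 | g1 <;> rcases memI h2 with g2 | g2
    · obtain ⟨e1, e2⟩ := pair_eq g1
      obtain ⟨e3, e4⟩ := pair_eq g2
      subst e1; subst e2; subst e3; subst e4
      exact iff_of_false (notR_of_I_left hM hcI) (notR_of_I_left hM hdI)
    · obtain ⟨e1, e2⟩ := pair_eq g1
      subst e1; subst e2
      exact iff_of_false (notR_of_I_left hM hcI) (notR_of_I_left hM hdI)
    · obtain ⟨e3, e4⟩ := pair_eq g2
      subst e3; subst e4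
      by_cases hx : x ∈ PM M
      · -- `R x c ↔ R y d` via the pattern of `d`
        constructor
        · intro hr
          exact hd1 y (hA₁mem.2 ⟨x, g1, hx, hr⟩)
        · intro hr
          by_contra hnr
          exact hd0 y (hA₀mem.2 ⟨x, g1, hx, hnr⟩) hr
      · exact iff_of_false (notR_of_I_left hM (I_of_notP hM hx))
          (notR_of_I_left hM (I_of_notP hM (fun hy => hx ((hG.presP g1).2 hy))))
    · exact hG.presR g1 g2
  · -- closL
    intro x y h1 hx n hn w hw hr
    rcases memI h1 with g1 | g1
    · obtain ⟨e1, e2⟩ := pair_eq g1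
      subst e1
      exact absurd hx hcP
    · obtain ⟨w', hw'⟩ := hG.closL g1 hx n hn w hw hr
      exact ⟨w', Finset.mem_insert_of_mem hw'⟩
  · -- closR
    intro x y h1 hy n hn w hw hr
    rcases memI h1 with g1 | g1
    · obtain ⟨e1, e2⟩ := pair_eq g1
      subst e2
      exact absurd hy hdP
    · obtain ⟨w', hw'⟩ := hG.closR g1 hy n hn w hw hr
      exact ⟨w', Finset.mem_insert_of_mem hw'⟩
  · -- highL
    intro n hn
    have hsub : (insert (c, d) G).filter (fun p => p.1 ∈ InM M n) ⊆
        insert (c, d) (G.filter (fun p => p.1 ∈ InM M n)) := by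
      intro p hp
      obtain ⟨hp1, hp2⟩ := Finset.mem_filter.1 hp
      rcases Finset.mem_insert.1 hp1 with h | h
      · exact Finset.mem_insert.2 (Or.inl h)
      · exact Finset.mem_insert.2 (Or.inr (Finset.mem_filter.2 ⟨h, hp2⟩))
    have h1 : ((insert (c, d) G).filter (fun p => p.1 ∈ InM M n)).card ≤
        (G.filter (fun p => p.1 ∈ InM M n)).card + 1 :=
      le_trans (Finset.card_le_card hsub) (Finset.card_insert_le _ _)
    have h2 := hG.highL n hn
    omega
  · -- highR
    intro n hn
    -- the range of `G` has no elements at level `n` if `n > T`; `d` is at level `> T` or none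
    by_cases hdn : d ∈ InM M n
    · -- then `n > T`, so `G` contributes nothing at level `n`
      have hnT : T < n := by
        by_contra hle
        exact hdlow n (by omega) hdn
      have hGe : G.filter (fun p => p.2 ∈ InM M n) = ∅ := by
        apply Finset.filter_eq_empty_iff.2
        intro p hp hpn
        exact absurd (hThigh p.2 n ⟨p.1, hp⟩ hpn) (by omega)
      have hsub : (insert (c, d) G).filter (fun p => p.2 ∈ InM M n) ⊆
          insert (c, d) (G.filter (fun p => p.2 ∈ InM M n)) := by
        intro p hp
        obtain ⟨hp1, hp2⟩ := Finset.mem_filter.1 hp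
        rcases Finset.mem_insert.1 hp1 with h | h
        · exact Finset.mem_insert.2 (Or.inl h)
        · exact Finset.mem_insert.2 (Or.inr (Finset.mem_filter.2 ⟨h, hp2⟩))
      have h1 : ((insert (c, d) G).filter (fun p => p.2 ∈ InM M n)).card ≤ 1 := by
        refine le_trans (Finset.card_le_card hsub) ?_
        rw [hGe]
        simp
      have : K < n := hn
      omega
    · have he : (insert (c, d) G).filter (fun p => p.2 ∈ InM M n) =
          G.filter (fun p => p.2 ∈ InM M n) := by
        rw [Finset.filter_insert, if_neg hdn]
      rw [he]
      have := hG.highR n hn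
      omega

end SecC4
section SecC5
open scoped Classical

variable {M : Type u} [Lcas.Structure M]

/-- Extension by a new element of `P`. -/
lemma extend_P (hM : IsTcasModel M) {K j : ℕ} {G : Finset (M × M)}
    (hG : Good M K (j + 1) G) {c : M} (hc : ∀ y, (c, y) ∉ G) (hcP : c ∈ PM M) :
    ∃ d G', G ⊆ G' ∧ (c, d) ∈ G' ∧ Good M K j G' := by
  set domF : Finset M := G.image Prod.fst with hdomF
  have mem_domF : ∀ {x : M}, x ∈ domF ↔ ∃ y, (x, y) ∈ G := by
    intro x
    constructor
    · intro h
      obtain ⟨p, hp, he⟩ := Finset.mem_image.1 h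
      exact ⟨p.2, by rw [← he]; exact hp⟩
    · rintro ⟨y, h⟩
      exact Finset.mem_image.2 ⟨(x, y), h, rfl⟩
  set B₁' : Finset M := (G.filter (fun p => RM M c p.1)).image Prod.snd with hB₁'
  have mem_B₁' : ∀ {y : M}, y ∈ B₁' ↔ ∃ x, (x, y) ∈ G ∧ RM M c x := by
    intro y
    constructor
    · intro h
      obtain ⟨p, hp, he⟩ := Finset.mem_image.1 h
      obtain ⟨hp1, hp2⟩ := Finset.mem_filter.1 hp
      exact ⟨p.1, by rw [← he]; exact hp1, hp2⟩
    · rintro ⟨x, h1, h2⟩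
      exact Finset.mem_image.2 ⟨(x, y), Finset.mem_filter.2 ⟨h1, h2⟩, rfl⟩
  have hB₁I : ↑B₁' ⊆ IM M := by
    intro y hy
    obtain ⟨x, h1, h2⟩ := mem_B₁'.1 (by exact_mod_cast hy)
    exact ((hG.presI hM h1).1 (hM.R_sub c x h2).2)
  set rngP : Finset M := (G.filter (fun p => p.2 ∈ PM M)).image Prod.snd with hrngP
  have mem_rngP : ∀ {y : M}, y ∈ rngP ↔ ∃ x, (x, y) ∈ G ∧ y ∈ PM M := by
    intro y
    constructor
    · intro h
      obtain ⟨p, hp, he⟩ := Finset.mem_image.1 h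
      obtain ⟨hp1, hp2⟩ := Finset.mem_filter.1 hp
      exact ⟨p.1, by rw [← he]; exact hp1, he ▸ hp2⟩
    · rintro ⟨x, h1, h2⟩
      exact Finset.mem_image.2 ⟨(x, y), Finset.mem_filter.2 ⟨h1, h2⟩, rfl⟩
  have hrngPP : ↑rngP ⊆ PM M := by
    intro y hy
    obtain ⟨x, -, h2⟩ := mem_rngP.1 (by exact_mod_cast hy)
    exact h2
  set rngI : Finset M := (G.filter (fun p => p.2 ∈ IM M)).image Prod.snd with hrngI
  have mem_rngI : ∀ {y : M}, y ∈ rngI ↔ ∃ x, (x, y) ∈ G ∧ y ∈ IM M := by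
    intro y
    constructor
    · intro h
      obtain ⟨p, hp, he⟩ := Finset.mem_image.1 h
      obtain ⟨hp1, hp2⟩ := Finset.mem_filter.1 hp
      exact ⟨p.1, by rw [← he]; exact hp1, he ▸ hp2⟩
    · rintro ⟨x, h1, h2⟩
      exact Finset.mem_image.2 ⟨(x, y), Finset.mem_filter.2 ⟨h1, h2⟩, rfl⟩
  set X : Finset M := rngP.biUnion
    (fun y => (Finset.range (K + 1)).biUnion (fun n => nbF hM y n)) with hX
  have mem_X : ∀ {w : M}, w ∈ X ↔ ∃ y ∈ rngP, ∃ n, n ≤ K ∧ w ∈ nbF hM y n := by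
    intro w
    constructor
    · intro h
      obtain ⟨y, hy, h2⟩ := Finset.mem_biUnion.1 h
      obtain ⟨n, hn, h3⟩ := Finset.mem_biUnion.1 h2
      exact ⟨y, hy, n, Nat.lt_succ_iff.1 (Finset.mem_range.1 hn), h3⟩
    · rintro ⟨y, hy, n, hn, h3⟩
      exact Finset.mem_biUnion.2 ⟨y, hy, Finset.mem_biUnion.2
        ⟨n, Finset.mem_range.2 (by omega), h3⟩⟩
  obtain ⟨bs, hbsI, hbsB₁, hbs0, hbsR⟩ := exists_bstar hM rngP hrngPP B₁' hB₁I
  set B₀' : Finset M := (rngI ∪ X ∪ {bs}) \ B₁' with hB₀'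
  have hB₀I : ↑B₀' ⊆ IM M := by
    intro w hw
    have hw' := Finset.mem_sdiff.1 (by exact_mod_cast hw)
    rcases Finset.mem_union.1 hw'.1 with h | h
    · rcases Finset.mem_union.1 h with h | h
      · exact (mem_rngI.1 h).choose_spec.2
      · obtain ⟨y, hy, n, hn, h3⟩ := mem_X.1 h
        exact hM.In_sub n ((mem_nbF hM (hrngPP hy)).1 h3).1
    · rw [Finset.mem_singleton.1 h]; exact hbsI
  -- a canonical preimage function for elements of `B₁'`
  set g : M → M := fun y => if h : ∃ x, (x, y) ∈ G ∧ RM M c x then h.choose else y with hg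
  have hgspec : ∀ y ∈ B₁', (g y, y) ∈ G ∧ RM M c (g y) := by
    intro y hy
    have hex := mem_B₁'.1 hy
    rw [hg]; simp only [dif_pos hex]
    exact hex.choose_spec
  -- the main extension point `d`
  obtain ⟨d, hdP, hd1, hd0⟩ := hM.ext_P B₀' B₁' hB₀I hB₁I
    (Finset.disjoint_left.2 (fun a ha hb => (Finset.mem_sdiff.1 ha).2 hb))
    (by
      intro n
      have hset : (↑B₁' : Set M) ∩ InM M n = ↑(B₁'.filter (· ∈ InM M n)) := by
        ext w
        simp only [Finset.coe_filter, Set.mem_inter_iff, Finset.mem_coe, Set.mem_setOf_eq]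
      rw [hset, Set.ncard_coe_finset]
      by_cases hn : n ≤ K
      · calc (B₁'.filter (· ∈ InM M n)).card ≤ (nbF hM c n).card := by
              apply Finset.card_le_card_of_injOn g
              · intro y hy
                obtain ⟨hy1, hy2⟩ := Finset.mem_filter.1 hy
                obtain ⟨hp, hr⟩ := hgspec y hy1
                exact (mem_nbF hM hcP).2 ⟨(hG.presIn n hn hp).2 hy2, hr⟩
              · intro y hy y' hy' he
                obtain ⟨hp, -⟩ := hgspec y (Finset.mem_filter.1 hy).1
                obtain ⟨hp', -⟩ := hgspec y' (Finset.mem_filter.1 hy').1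
                exact hG.func (he ▸ hp) hp'
          _ = n := nbF_card hM hcP n
      · push_neg at hn
        have hhigh := hG.highR n hn
        have hle : (B₁'.filter (· ∈ InM M n)).card ≤
            (G.filter (fun p => p.2 ∈ InM M n)).card := by
          apply Finset.card_le_card_of_injOn (fun y => (g y, y))
          · intro y hy
            obtain ⟨hy1, hy2⟩ := Finset.mem_filter.1 hy
            exact Finset.mem_filter.2 ⟨(hgspec y hy1).1, hy2⟩
          · intro y _ y' _ he
            exact congrArg Prod.snd he
        omega)
  have hdbs : ¬ RM M d bs := by
    apply hd0
    rw [hB₀']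
    exact Finset.mem_sdiff.2 ⟨Finset.mem_union.2 (Or.inr (Finset.mem_singleton_self bs)), hbsB₁⟩
  have hdI : d ∉ IM M := notI_of_P hM hdP
  have hdrng : ∀ ⦃x y : M⦄, (x, y) ∈ G → y ≠ d := by
    intro x y hxy he
    subst he
    by_cases hy : y ∈ PM M
    · exact hdbs (hbsR y (mem_rngP.2 ⟨x, hxy, hy⟩))
    · exact hy hdP
  -- cardinalities of old witnesses match
  have hcardmatch : ∀ n, n ≤ K →
      (nbF hM c n \ domF).card = (nbF hM d n \ B₁').card := by
    intro n hn
    set un : Finset (M × M) := G.filter (fun p => p.1 ∈ nbF hM c n) with hun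
    have h1 : (un.image Prod.fst) = nbF hM c n ∩ domF := by
      ext x
      constructor
      · intro h
        obtain ⟨p, hp, he⟩ := Finset.mem_image.1 h
        obtain ⟨hp1, hp2⟩ := Finset.mem_filter.1 hp
        subst he
        exact Finset.mem_inter.2 ⟨hp2, mem_domF.2 ⟨p.2, hp1⟩⟩
      · intro h
        obtain ⟨hx1, hx2⟩ := Finset.mem_inter.1 h
        obtain ⟨y, hy⟩ := mem_domF.1 hx2
        exact Finset.mem_image.2 ⟨(x, y), Finset.mem_filter.2 ⟨hy, hx1⟩, rfl⟩
    have h2 : (un.image Prod.snd) = nbF hM d n ∩ B₁' := by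
      ext y
      constructor
      · intro h
        obtain ⟨p, hp, he⟩ := Finset.mem_image.1 h
        obtain ⟨hp1, hp2⟩ := Finset.mem_filter.1 hp
        subst he
        have hpn := (mem_nbF hM hcP).1 hp2
        have hyB : p.2 ∈ B₁' := mem_B₁'.2 ⟨p.1, hp1, hpn.2⟩
        exact Finset.mem_inter.2 ⟨(mem_nbF hM hdP).2
          ⟨(hG.presIn n hn hp1).1 hpn.1, hd1 _ hyB⟩, hyB⟩
      · intro h
        obtain ⟨hy1, hy2⟩ := Finset.mem_inter.1 h
        obtain ⟨x, hxy, hxr⟩ := mem_B₁'.1 hy2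
        have hxn : x ∈ InM M n := (hG.presIn n hn hxy).2 ((mem_nbF hM hdP).1 hy1).1
        exact Finset.mem_image.2 ⟨(x, y), Finset.mem_filter.2
          ⟨hxy, (mem_nbF hM hcP).2 ⟨hxn, hxr⟩⟩, rfl⟩
    have hc1 : (un.image Prod.fst).card = un.card := by
      apply Finset.card_image_of_injOn
      intro p hp q hq he
      exact Prod.ext he (hG.func (he ▸ (Finset.mem_filter.1 hp).1) (Finset.mem_filter.1 hq).1)
    have hc2 : (un.image Prod.snd).card = un.card := by
      apply Finset.card_image_of_injOn
      intro p hp q hq he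
      exact Prod.ext (hG.inj (he ▸ (Finset.mem_filter.1 hp).1) (Finset.mem_filter.1 hq).1) he
    have e1 := Finset.card_sdiff_add_card_inter (nbF hM c n) domF
    have e2 := Finset.card_sdiff_add_card_inter (nbF hM d n) B₁'
    have e3 : (nbF hM c n ∩ domF).card = (nbF hM d n ∩ B₁').card := by
      rw [← h1, ← h2, hc1, hc2]
    have e4 : (nbF hM c n).card = n := nbF_card hM hcP n
    have e5 : (nbF hM d n).card = n := nbF_card hM hdP n
    omega
  -- the matched new witnesses
  have hexS : ∀ n, n ≤ K → ∃ S : Finset (M × M),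
      (∀ p ∈ S, p.1 ∈ nbF hM c n \ domF ∧ p.2 ∈ nbF hM d n \ B₁') ∧
      (∀ x ∈ nbF hM c n \ domF, ∃ y, (x, y) ∈ S) ∧
      (∀ y ∈ nbF hM d n \ B₁', ∃ x, (x, y) ∈ S) ∧
      (∀ x y y', (x, y) ∈ S → (x, y') ∈ S → y = y') ∧
      (∀ x x' y, (x, y) ∈ S → (x', y) ∈ S → x = x') := by
    intro n hn
    exact exists_pairing _ _ (hcardmatch n hn)
  set S : ℕ → Finset (M × M) := fun n => if h : n ≤ K then (hexS n h).choose else ∅ with hSdef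
  have hS : ∀ n (h : n ≤ K),
      (∀ p ∈ S n, p.1 ∈ nbF hM c n \ domF ∧ p.2 ∈ nbF hM d n \ B₁') ∧
      (∀ x ∈ nbF hM c n \ domF, ∃ y, (x, y) ∈ S n) ∧
      (∀ y ∈ nbF hM d n \ B₁', ∃ x, (x, y) ∈ S n) ∧
      (∀ x y y', (x, y) ∈ S n → (x, y') ∈ S n → y = y') ∧
      (∀ x x' y, (x, y) ∈ S n → (x', y) ∈ S n → x = x') := by
    intro n h
    rw [hSdef]; simp only [dif_pos h]
    exact (hexS n h).choose_spec
  -- facts about witness pairs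
  have hW : ∀ {n w w'}, n ≤ K → (w, w') ∈ S n →
      w ∈ InM M n ∧ RM M c w ∧ w ∉ domF ∧ w' ∈ InM M n ∧ RM M d w' ∧ w' ∉ B₁' := by
    intro n w w' hn hmem
    obtain ⟨h1, h2⟩ := (hS n hn).1 _ hmem
    obtain ⟨h11, h12⟩ := Finset.mem_sdiff.1 h1
    obtain ⟨h21, h22⟩ := Finset.mem_sdiff.1 h2
    have e1 := (mem_nbF hM hcP).1 h11
    have e2 := (mem_nbF hM hdP).1 h21
    exact ⟨e1.1, e1.2, h12, e2.1, e2.2, h22⟩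
  have hWoldL : ∀ {x y w : M}, (x, y) ∈ G → x ∈ PM M → ∀ {n}, n ≤ K → w ∈ InM M n →
      w ∉ domF → ¬ RM M x w := by
    intro x y w hxy hx n hn hwn hwd hr
    obtain ⟨w', hw'⟩ := hG.closL hxy hx n hn w hwn hr
    exact hwd (mem_domF.2 ⟨w', hw'⟩)
  have hWX : ∀ {n w w'}, n ≤ K → (w, w') ∈ S n → w' ∉ X := by
    intro n w w' hn hmem hX'
    obtain ⟨-, -, -, -, hrd, hwB⟩ := hW hn hmem
    apply hd0 w'
    · rw [hB₀']
      exact Finset.mem_sdiff.2 ⟨Finset.mem_union.2 (Or.inl (Finset.mem_union.2 (Or.inr hX'))),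
        hwB⟩
    · exact hrd
  have hWoldR : ∀ {x y : M} {n w w'}, (x, y) ∈ G → y ∈ PM M → n ≤ K → (w, w') ∈ S n →
      ¬ RM M y w' := by
    intro x y n w w' hxy hy hn hmem hr
    obtain ⟨-, -, -, hw'n, -, -⟩ := hW hn hmem
    exact hWX hn hmem (mem_X.2 ⟨y, mem_rngP.2 ⟨x, hxy, hy⟩, n, hn, (mem_nbF hM hy).2 ⟨hw'n, hr⟩⟩)
  have hWrng : ∀ {x y : M} {n w w'}, (x, y) ∈ G → n ≤ K → (w, w') ∈ S n → y ≠ w' := by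
    intro x y n w w' hxy hn hmem he
    subst he
    obtain ⟨-, -, -, hw'n, hrd, hwB⟩ := hW hn hmem
    by_cases hy : y ∈ PM M
    · exact notIn_of_P hM hy n hw'n
    · apply hd0 y
      · rw [hB₀']
        exact Finset.mem_sdiff.2 ⟨Finset.mem_union.2 (Or.inl (Finset.mem_union.2
          (Or.inl (mem_rngI.2 ⟨x, hxy, I_of_notP hM hy⟩)))), hwB⟩
      · exact hrd
  -- the extended map
  refine ⟨d, insert (c, d) G ∪ (Finset.range (K + 1)).biUnion S, ?_, ?_, ?_⟩
  · intro p hp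
    exact Finset.mem_union.2 (Or.inl (Finset.mem_insert_of_mem hp))
  · exact Finset.mem_union.2 (Or.inl (Finset.mem_insert_self _ _))
  have memG' : ∀ {p : M × M}, p ∈ insert (c, d) G ∪ (Finset.range (K + 1)).biUnion S →
      p = (c, d) ∨ p ∈ G ∨ ∃ n, n ≤ K ∧ p ∈ S n := by
    intro p hp
    rcases Finset.mem_union.1 hp with h | h
    · rcases Finset.mem_insert.1 h with h | h
      · exact Or.inl h
      · exact Or.inr (Or.inl h)
    · obtain ⟨n, hn, h2⟩ := Finset.mem_biUnion.1 h
      exact Or.inr (Or.inr ⟨n, by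
        have := Finset.mem_range.1 hn
        omega, h2⟩)
  have memS : ∀ {n : ℕ} {p : M × M}, n ≤ K → p ∈ S n →
      p ∈ insert (c, d) G ∪ (Finset.range (K + 1)).biUnion S := by
    intro n p hn hp
    exact Finset.mem_union.2 (Or.inr (Finset.mem_biUnion.2
      ⟨n, Finset.mem_range.2 (by omega), hp⟩))
  constructor
  · -- func
    intro x y y' h1 h2
    rcases memG' h1 with g1 | g1 | ⟨n, hn, g1⟩ <;> rcases memG' h2 with g2 | g2 | ⟨m, hm, g2⟩
    · obtain ⟨e1, e2⟩ := pair_eq g1; obtain ⟨e3, e4⟩ := pair_eq g2; rw [e2, e4]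
    · obtain ⟨e1, e2⟩ := pair_eq g1; subst e1; exact absurd g2 (hc y')
    · obtain ⟨e1, e2⟩ := pair_eq g1
      subst e1
      exact absurd hcP (notP_of_I hM (hM.In_sub m (hW hm g2).1))
    · obtain ⟨e1, e2⟩ := pair_eq g2; subst e1; exact absurd g1 (hc y)
    · exact hG.func g1 g2
    · exact absurd (mem_domF.2 ⟨y, g1⟩) (hW hm g2).2.2.1
    · obtain ⟨e1, e2⟩ := pair_eq g2
      subst e1
      exact absurd hcP (notP_of_I hM (hM.In_sub n (hW hn g1).1))
    · exact absurd (mem_domF.2 ⟨y', g2⟩) (hW hn g1).2.2.1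
    · have hnm : n = m := In_unique hM (hW hn g1).1 (hW hm g2).1
      subst hnm
      exact (hS n hn).2.2.2.1 x y y' g1 g2
  · -- inj
    intro x x' y h1 h2
    rcases memG' h1 with g1 | g1 | ⟨n, hn, g1⟩ <;> rcases memG' h2 with g2 | g2 | ⟨m, hm, g2⟩
    · obtain ⟨e1, e2⟩ := pair_eq g1; obtain ⟨e3, e4⟩ := pair_eq g2; rw [e1, e3]
    · obtain ⟨e1, e2⟩ := pair_eq g1; subst e2; exact absurd rfl (hdrng g2)
    · obtain ⟨e1, e2⟩ := pair_eq g1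
      subst e2
      exact absurd hdP (notP_of_I hM (hM.In_sub m (hW hm g2).2.2.2.1))
    · obtain ⟨e1, e2⟩ := pair_eq g2; subst e2; exact absurd rfl (hdrng g1)
    · exact hG.inj g1 g2
    · exact absurd rfl (hWrng g1 hm g2)
    · obtain ⟨e1, e2⟩ := pair_eq g2
      subst e2
      exact absurd hdP (notP_of_I hM (hM.In_sub n (hW hn g1).2.2.2.1))
    · exact absurd rfl (hWrng g2 hn g1)
    · have hnm : n = m := In_unique hM (hW hn g1).2.2.2.1 (hW hm g2).2.2.2.1
      subst hnm
      exact (hS n hn).2.2.2.2 x x' y g1 g2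
  · -- presP
    intro x y h1
    rcases memG' h1 with g1 | g1 | ⟨n, hn, g1⟩
    · obtain ⟨e1, e2⟩ := pair_eq g1; subst e1; subst e2; exact iff_of_true hcP hdP
    · exact hG.presP g1
    · exact iff_of_false (notP_of_I hM (hM.In_sub n (hW hn g1).1))
        (notP_of_I hM (hM.In_sub n (hW hn g1).2.2.2.1))
  · -- presIn
    intro m hm x y h1
    rcases memG' h1 with g1 | g1 | ⟨n, hn, g1⟩
    · obtain ⟨e1, e2⟩ := pair_eq g1
      subst e1; subst e2
      exact iff_of_false (notIn_of_P hM hcP m) (notIn_of_P hM hdP m)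
    · exact hG.presIn m hm g1
    · by_cases hmn : m = n
      · subst hmn
        exact iff_of_true (hW hn g1).1 (hW hn g1).2.2.2.1
      · exact iff_of_false (fun h => hmn (In_unique hM h (hW hn g1).1))
          (fun h => hmn (In_unique hM h (hW hn g1).2.2.2.1))
  · -- presR
    intro x y x' y' h1 h2
    rcases memG' h1 with g1 | g1 | ⟨n, hn, g1⟩ <;> rcases memG' h2 with g2 | g2 | ⟨m, hm, g2⟩
    · obtain ⟨e1, e2⟩ := pair_eq g1; obtain ⟨e3, e4⟩ := pair_eq g2
      subst e1; subst e2; subst e3; subst e4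
      exact iff_of_false (notR_right_P hM hcP) (notR_right_P hM hdP)
    · -- (c,d) then old pair
      obtain ⟨e1, e2⟩ := pair_eq g1
      subst e1; subst e2
      by_cases hx' : x' ∈ PM M
      · exact iff_of_false (notR_right_P hM hx') (notR_right_P hM ((hG.presP g2).1 hx'))
      · constructor
        · intro hr
          exact hd1 y' (mem_B₁'.2 ⟨x', g2, hr⟩)
        · intro hr
          by_contra hnr
          have hy'I : y' ∈ IM M := (hG.presI hM g2).1 (I_of_notP hM hx')
          by_cases hyB : y' ∈ B₁'
          · obtain ⟨x₂, hx₂, hx₂r⟩ := mem_B₁'.1 hyB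
            rw [hG.inj hx₂ g2] at hx₂r
            exact hnr hx₂r
          · apply hd0 y' _ hr
            rw [hB₀']
            exact Finset.mem_sdiff.2 ⟨Finset.mem_union.2 (Or.inl (Finset.mem_union.2
              (Or.inl (mem_rngI.2 ⟨x', g2, hy'I⟩)))), hyB⟩
    · -- (c,d) then witness pair
      obtain ⟨e1, e2⟩ := pair_eq g1
      subst e1; subst e2
      exact iff_of_true (hW hm g2).2.1 (hW hm g2).2.2.2.2.1
    · -- old pair then (c,d)
      obtain ⟨e1, e2⟩ := pair_eq g2
      subst e1; subst e2
      exact iff_of_false (notR_right_P hM hcP) (notR_right_P hM hdP)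
    · exact hG.presR g1 g2
    · -- old pair then witness pair
      by_cases hx : x ∈ PM M
      · exact iff_of_false (hWoldL g1 hx hm (hW hm g2).1 (hW hm g2).2.2.1)
          (hWoldR g1 ((hG.presP g1).1 hx) hm g2)
      · exact iff_of_false (notR_of_I_left hM (I_of_notP hM hx))
          (notR_of_I_left hM ((hG.presI hM g1).1 (I_of_notP hM hx)))
    · -- witness pair then (c,d)
      obtain ⟨e1, e2⟩ := pair_eq g2
      subst e1; subst e2
      exact iff_of_false (notR_right_P hM hcP) (notR_right_P hM hdP)
    · -- witness pair then old pair
      exact iff_of_false (notR_of_I_left hM (hM.In_sub n (hW hn g1).1))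
        (notR_of_I_left hM (hM.In_sub n (hW hn g1).2.2.2.1))
    · exact iff_of_false (notR_of_I_left hM (hM.In_sub n (hW hn g1).1))
        (notR_of_I_left hM (hM.In_sub n (hW hn g1).2.2.2.1))
  · -- closL
    intro x y h1 hx n hn w hw hr
    rcases memG' h1 with g1 | g1 | ⟨m, hm, g1⟩
    · obtain ⟨e1, e2⟩ := pair_eq g1
      subst e1; subst e2
      have hwnb : w ∈ nbF hM x n := (mem_nbF hM hcP).2 ⟨hw, hr⟩
      by_cases hwd : w ∈ domF
      · obtain ⟨w', hw'⟩ := mem_domF.1 hwd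
        exact ⟨w', Finset.mem_union.2 (Or.inl (Finset.mem_insert_of_mem hw'))⟩
      · obtain ⟨w', hw'⟩ := (hS n hn).2.1 w (Finset.mem_sdiff.2 ⟨hwnb, hwd⟩)
        exact ⟨w', memS hn hw'⟩
    · obtain ⟨w', hw'⟩ := hG.closL g1 hx n hn w hw hr
      exact ⟨w', Finset.mem_union.2 (Or.inl (Finset.mem_insert_of_mem hw'))⟩
    · exact absurd hx (notP_of_I hM (hM.In_sub m (hW hm g1).1))
  · -- closR
    intro x y h1 hy n hn w hw hr
    rcases memG' h1 with g1 | g1 | ⟨m, hm, g1⟩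
    · obtain ⟨e1, e2⟩ := pair_eq g1
      subst e1; subst e2
      have hwnb : w ∈ nbF hM y n := (mem_nbF hM hdP).2 ⟨hw, hr⟩
      by_cases hwB : w ∈ B₁'
      · obtain ⟨x₂, hx₂, -⟩ := mem_B₁'.1 hwB
        exact ⟨x₂, Finset.mem_union.2 (Or.inl (Finset.mem_insert_of_mem hx₂))⟩
      · obtain ⟨w', hw'⟩ := (hS n hn).2.2.1 w (Finset.mem_sdiff.2 ⟨hwnb, hwB⟩)
        exact ⟨w', memS hn hw'⟩
    · obtain ⟨w', hw'⟩ := hG.closR g1 hy n hn w hw hr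
      exact ⟨w', Finset.mem_union.2 (Or.inl (Finset.mem_insert_of_mem hw'))⟩
    · exact absurd hy (notP_of_I hM (hM.In_sub m (hW hm g1).2.2.2.1))
  · -- highL
    intro n hn
    have hsub : (insert (c, d) G ∪ (Finset.range (K + 1)).biUnion S).filter
        (fun p => p.1 ∈ InM M n) ⊆ G.filter (fun p => p.1 ∈ InM M n) := by
      intro p hp
      obtain ⟨hp1, hp2⟩ := Finset.mem_filter.1 hp
      rcases memG' hp1 with g1 | g1 | ⟨m, hm, g1⟩
      · subst g1
        exact absurd hp2 (notIn_of_P hM hcP n)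
      · exact Finset.mem_filter.2 ⟨g1, hp2⟩
      · have hfst : p.1 ∈ InM M m := by
          have hp' : p = (p.1, p.2) := rfl
          rw [hp'] at g1
          exact (hW hm g1).1
        have := In_unique hM hfst hp2
        omega
    have := hG.highL n hn
    have := Finset.card_le_card hsub
    omega
  · -- highR
    intro n hn
    have hsub : (insert (c, d) G ∪ (Finset.range (K + 1)).biUnion S).filter
        (fun p => p.2 ∈ InM M n) ⊆ G.filter (fun p => p.2 ∈ InM M n) := by
      intro p hp
      obtain ⟨hp1, hp2⟩ := Finset.mem_filter.1 hp
      rcases memG' hp1 with g1 | g1 | ⟨m, hm, g1⟩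
      · subst g1
        exact absurd hp2 (notIn_of_P hM hdP n)
      · exact Finset.mem_filter.2 ⟨g1, hp2⟩
      · have hsnd : p.2 ∈ InM M m := by
          have hp' : p = (p.1, p.2) := rfl
          rw [hp'] at g1
          exact (hW hm g1).2.2.2.1
        have := In_unique hM hsnd hp2
        omega
    have := hG.highR n hn
    have := Finset.card_le_card hsub
    omega

end SecC5
section SecD
open scoped Classical

variable {M : Type u} [Lcas.Structure M]

/-- Combined extension lemma. -/
lemma Good.extend (hM : IsTcasModel M) {K j : ℕ} {G : Finset (M × M)}
    (hG : Good M K (j + 1) G) (hjK : j + 1 ≤ K) (c : M) :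
    ∃ d G', G ⊆ G' ∧ (c, d) ∈ G' ∧ Good M K j G' := by
  by_cases hcd : ∃ y, (c, y) ∈ G
  · obtain ⟨y, hy⟩ := hcd
    exact ⟨y, G, subset_rfl, hy, hG.mono (by omega)⟩
  push_neg at hcd
  by_cases hcP : c ∈ PM M
  · exact extend_P hM hG hcd hcP
  have hcI : c ∈ IM M := I_of_notP hM hcP
  by_cases hlow : ∃ n, n ≤ K ∧ c ∈ InM M n
  · obtain ⟨n, hn, hcn⟩ := hlow
    exact extend_I_low hM hG hcd hn hcn
  · push_neg at hlow
    exact extend_I_high hM hG hjK hcd hcI hlow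

/-- Quantifier depth. -/
def qd {α : Type*} : ∀ {n : ℕ}, Lcas.BoundedFormula α n → ℕ
  | _, BoundedFormula.falsum => 0
  | _, BoundedFormula.equal _ _ => 0
  | _, BoundedFormula.rel _ _ => 0
  | _, BoundedFormula.imp f g => max (qd f) (qd g)
  | _, BoundedFormula.all f => qd f + 1

/-- The index of a relation symbol (`n` for `I_n`, otherwise `0`). -/
def relIdx : ∀ {l : ℕ}, Lcas.Relations l → ℕ
  | 1, R => (match (R : CasRel1) with
    | CasRel1.In n => n
    | _ => 0)
  | 0, _ => 0
  | 2, _ => 0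
  | (_ + 3), _ => 0

@[simp] lemma relIdx_In (n : ℕ) : relIdx (l := 1) (CasRel1.In n) = n := rfl

/-- The largest index of an `I_n` symbol occurring in a formula. -/
def maxRel {α : Type*} : ∀ {n : ℕ}, Lcas.BoundedFormula α n → ℕ
  | _, BoundedFormula.falsum => 0
  | _, BoundedFormula.equal _ _ => 0
  | _, BoundedFormula.rel R _ => relIdx R
  | _, BoundedFormula.imp f g => max (maxRel f) (maxRel g)
  | _, BoundedFormula.all f => maxRel f

lemma term_pair {n : ℕ} {G : Finset (M × M)} (t : Lcas.Term ((M ⊕ Fin 1) ⊕ Fin n))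
    {v₁ v₂ : M ⊕ Fin 1 → M} {xs ys : Fin n → M}
    (hv : ∀ a ∈ t.varFinsetLeft, (v₁ a, v₂ a) ∈ G) (hxs : ∀ i, (xs i, ys i) ∈ G) :
    (t.realize (Sum.elim v₁ xs), t.realize (Sum.elim v₂ ys)) ∈ G := by
  obtain ⟨i, rfl⟩ := term_is_var t
  cases i with
  | inl a =>
    simpa using hv a (by simp [Term.varFinsetLeft])
  | inr k =>
    simpa using hxs k

lemma rel1_pres (hM : IsTcasModel M) {K j : ℕ} {G : Finset (M × M)} (hG : Good M K j G)
    (R : Lcas.Relations 1) (hR : relIdx R ≤ K) {x y : M} (h : (x, y) ∈ G) :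
    (Structure.RelMap (L := Lcas) R ![x] ↔ Structure.RelMap (L := Lcas) R ![y]) := by
  match R with
  | CasRel1.P => exact hG.presP h
  | CasRel1.I => exact hG.presI hM h
  | CasRel1.In m => exact hG.presIn m (by simpa using hR) h

lemma rel2_pres {K j : ℕ} {G : Finset (M × M)} (hG : Good M K j G)
    (R : Lcas.Relations 2) {x x' y y' : M} (h : (x, y) ∈ G) (h' : (x', y') ∈ G) :
    (Structure.RelMap (L := Lcas) R ![x, x'] ↔ Structure.RelMap (L := Lcas) R ![y, y']) := by
  match R with
  | Unit.unit => exact hG.presR h h'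

/-- The main Ehrenfeucht–Fraïssé-style transfer lemma. -/
lemma ef_main (hM : IsTcasModel M) (K : ℕ) :
    ∀ {n : ℕ} (φ : Lcas.BoundedFormula (M ⊕ Fin 1) n) (j : ℕ) (G : Finset (M × M)),
      Good M K j G → qd φ ≤ j → j ≤ K → maxRel φ ≤ K →
      ∀ (v₁ v₂ : M ⊕ Fin 1 → M) (xs ys : Fin n → M),
      (∀ a ∈ φ.freeVarFinset, (v₁ a, v₂ a) ∈ G) → (∀ i, (xs i, ys i) ∈ G) →
      (φ.Realize v₁ xs ↔ φ.Realize v₂ ys) := by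
  intro n φ
  induction φ with
  | falsum =>
    intro j G hG hqd hjK hmr v₁ v₂ xs ys hv hxs
    exact Iff.rfl
  | equal t₁ t₂ =>
    intro j G hG hqd hjK hmr v₁ v₂ xs ys hv hxs
    have hp₁ := term_pair t₁ (G := G) (v₁ := v₁) (v₂ := v₂) (xs := xs) (ys := ys)
      (fun a ha => hv a (by simp [BoundedFormula.freeVarFinset]; exact Or.inl ha)) hxs
    have hp₂ := term_pair t₂ (G := G) (v₁ := v₁) (v₂ := v₂) (xs := xs) (ys := ys)
      (fun a ha => hv a (by simp [BoundedFormula.freeVarFinset]; exact Or.inr ha)) hxs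
    change (t₁.realize (Sum.elim v₁ xs) = t₂.realize (Sum.elim v₁ xs)) ↔
      (t₁.realize (Sum.elim v₂ ys) = t₂.realize (Sum.elim v₂ ys))
    constructor
    · intro h
      exact hG.func (h ▸ hp₁) hp₂
    · intro h
      exact hG.inj (h ▸ hp₁) hp₂
  | @rel n' l R ts =>
    intro j G hG hqd hjK hmr v₁ v₂ xs ys hv hxs
    change (Structure.RelMap R fun i => (ts i).realize (Sum.elim v₁ xs)) ↔
      (Structure.RelMap R fun i => (ts i).realize (Sum.elim v₂ ys))
    have hmr' : relIdx R ≤ K := hmr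
    have hpt : ∀ i : Fin l, ((ts i).realize (Sum.elim v₁ xs),
        (ts i).realize (Sum.elim v₂ ys)) ∈ G := by
      intro i
      refine term_pair (ts i) (fun a ha => hv a ?_) hxs
      simp only [BoundedFormula.freeVarFinset]
      exact Finset.mem_biUnion.2 ⟨i, Finset.mem_univ i, ha⟩
    match l, R, ts, hpt with
    | 0, R, ts, hpt => exact Empty.elim R
    | 1, R, ts, hpt =>
      have e₁ : (fun i => (ts i).realize (Sum.elim v₁ xs)) =
          ![(ts 0).realize (Sum.elim v₁ xs)] := by
        funext i
        have : i = 0 := Subsingleton.elim i 0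
        subst this; rfl
      have e₂ : (fun i => (ts i).realize (Sum.elim v₂ ys)) =
          ![(ts 0).realize (Sum.elim v₂ ys)] := by
        funext i
        have : i = 0 := Subsingleton.elim i 0
        subst this; rfl
      rw [e₁, e₂]
      exact rel1_pres hM hG R hmr' (hpt 0)
    | 2, R, ts, hpt =>
      have e₁ : (fun i => (ts i).realize (Sum.elim v₁ xs)) =
          ![(ts 0).realize (Sum.elim v₁ xs), (ts 1).realize (Sum.elim v₁ xs)] := by
        funext i
        fin_cases i <;> rfl
      have e₂ : (fun i => (ts i).realize (Sum.elim v₂ ys)) =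
          ![(ts 0).realize (Sum.elim v₂ ys), (ts 1).realize (Sum.elim v₂ ys)] := by
        funext i
        fin_cases i <;> rfl
      rw [e₁, e₂]
      exact rel2_pres hG R (hpt 0) (hpt 1)
    | (l + 3), R, ts, hpt => exact Empty.elim R
  | imp f g ihf ihg =>
    intro j G hG hqd hjK hmr v₁ v₂ xs ys hv hxs
    have hqd' : max (qd f) (qd g) ≤ j := hqd
    have hmr'' : max (maxRel f) (maxRel g) ≤ K := hmr
    change (f.Realize v₁ xs → g.Realize v₁ xs) ↔ (f.Realize v₂ ys → g.Realize v₂ ys)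
    have h₁ := ihf j G hG (le_trans (le_max_left _ _) hqd') hjK
      (le_trans (le_max_left _ _) hmr'') v₁ v₂ xs ys
      (fun a ha => hv a (Finset.mem_union.2 (Or.inl ha))) hxs
    have h₂ := ihg j G hG (le_trans (le_max_right _ _) hqd') hjK
      (le_trans (le_max_right _ _) hmr'') v₁ v₂ xs ys
      (fun a ha => hv a (Finset.mem_union.2 (Or.inr ha))) hxs
    rw [h₁, h₂]
  | all f ih =>
    intro j G hG hqd hjK hmr v₁ v₂ xs ys hv hxs
    have hqd' : qd f + 1 ≤ j := hqd
    obtain ⟨j', rfl⟩ : ∃ j', j = j' + 1 := ⟨j - 1, by omega⟩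
    change (∀ a : M, f.Realize v₁ (Fin.snoc xs a)) ↔ (∀ a : M, f.Realize v₂ (Fin.snoc ys a))
    have hmr' : maxRel f ≤ K := hmr
    constructor
    · intro h a
      obtain ⟨e, G'', hsub'', hmem'', hGood''⟩ := Good.extend hM hG.swap (by omega) a
      set G' := G''.image Prod.swap with hG'
      have hGood' : Good M K j' G' := hGood''.swap
      have hsub' : G ⊆ G' := by
        intro p hp
        have h1 : p.swap ∈ G.image Prod.swap := Finset.mem_image.2 ⟨p, hp, rfl⟩
        have h2 : p.swap ∈ G'' := hsub'' h1
        have h3 : p.swap.swap ∈ G' := Finset.mem_image.2 ⟨p.swap, h2, rfl⟩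
        rwa [Prod.swap_swap] at h3
      have hpair : (e, a) ∈ G' := mem_swap.2 hmem''
      refine (ih j' G' hGood' (by omega) (by omega) hmr' v₁ v₂
        (Fin.snoc xs e) (Fin.snoc ys a) (fun b hb => hsub' (hv b hb)) ?_).1 (h e)
      intro i
      refine Fin.lastCases ?_ ?_ i
      · rw [Fin.snoc_last, Fin.snoc_last]; exact hpair
      · intro k
        rw [Fin.snoc_castSucc, Fin.snoc_castSucc]
        exact hsub' (hxs k)
    · intro h a
      obtain ⟨e, G', hsub', hpair, hGood'⟩ := Good.extend hM hG (by omega) a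
      refine (ih j' G' hGood' (by omega) (by omega) hmr' v₁ v₂
        (Fin.snoc xs a) (Fin.snoc ys e) (fun b hb => hsub' (hv b hb)) ?_).2 (h e)
      intro i
      refine Fin.lastCases ?_ ?_ i
      · rw [Fin.snoc_last, Fin.snoc_last]; exact hpair
      · intro k
        rw [Fin.snoc_castSucc, Fin.snoc_castSucc]
        exact hsub' (hxs k)

end SecD
section SecE
open scoped Classical

variable {M : Type u} [Lcas.Structure M]

/-- The base partial isomorphism sending `a₁ ↦ a₂` and fixing parameters. -/
lemma base_good (hM : IsTcasModel M) (K r : ℕ) (supp Fset : Finset M)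
    (hFI : ↑Fset ⊆ IM M)
    (hsuppI : ∀ x ∈ supp, x ∈ IM M → x ∈ Fset)
    (hFwit : ∀ p ∈ supp, p ∈ PM M → ∀ n, n ≤ K → ∀ w, w ∈ nbF hM p n → w ∈ Fset)
    (hFlow : ∀ w ∈ Fset, w ∈ supp ∨ ∃ n, n ≤ K ∧ w ∈ InM M n)
    (hK : supp.card + r + 1 ≤ K)
    {a₁ a₂ : M} (h₁P : a₁ ∈ PM M) (h₂P : a₂ ∈ PM M)
    (hne : ∀ p ∈ supp, p ∈ PM M → a₁ ≠ p ∧ a₂ ≠ p)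
    (hpat : ∀ b ∈ Fset, (RM M a₁ b ↔ RM M a₂ b)) :
    ∃ G₀ : Finset (M × M), Good M K r G₀ ∧ (a₁, a₂) ∈ G₀ ∧ ∀ x ∈ supp, (x, x) ∈ G₀ := by
  set E : Finset M := supp ∪ Fset with hE
  have ha₁E : a₁ ∉ E := by
    intro h
    rcases Finset.mem_union.1 h with h | h
    · exact (hne a₁ h h₁P).1 rfl
    · exact notI_of_P hM h₁P (hFI h)
  have ha₂E : a₂ ∉ E := by
    intro h
    rcases Finset.mem_union.1 h with h | h
    · exact (hne a₂ h h₂P).2 rfl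
    · exact notI_of_P hM h₂P (hFI h)
  -- the pattern of `a₁` and `a₂` agree on `E`
  have hpatE : ∀ b ∈ E, b ∈ IM M → (RM M a₁ b ↔ RM M a₂ b) := by
    intro b hb hbI
    rcases Finset.mem_union.1 hb with h | h
    · exact hpat b (hsuppI b h hbI)
    · exact hpat b h
  -- matched witness cardinalities
  have hcardm : ∀ n, n ≤ K → (nbF hM a₁ n \ E).card = (nbF hM a₂ n \ E).card := by
    intro n hn
    have hint : nbF hM a₁ n ∩ E = nbF hM a₂ n ∩ E := by
      ext w
      constructor
      · intro h
        obtain ⟨h1, h2⟩ := Finset.mem_inter.1 h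
        obtain ⟨hwn, hwr⟩ := (mem_nbF hM h₁P).1 h1
        exact Finset.mem_inter.2 ⟨(mem_nbF hM h₂P).2
          ⟨hwn, (hpatE w h2 (hM.In_sub n hwn)).1 hwr⟩, h2⟩
      · intro h
        obtain ⟨h1, h2⟩ := Finset.mem_inter.1 h
        obtain ⟨hwn, hwr⟩ := (mem_nbF hM h₂P).1 h1
        exact Finset.mem_inter.2 ⟨(mem_nbF hM h₁P).2
          ⟨hwn, (hpatE w h2 (hM.In_sub n hwn)).2 hwr⟩, h2⟩
    have e1 := Finset.card_sdiff_add_card_inter (nbF hM a₁ n) E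
    have e2 := Finset.card_sdiff_add_card_inter (nbF hM a₂ n) E
    rw [hint] at e1
    rw [nbF_card hM h₁P n] at e1
    rw [nbF_card hM h₂P n] at e2
    omega
  have hexS : ∀ n, n ≤ K → ∃ S : Finset (M × M),
      (∀ p ∈ S, p.1 ∈ nbF hM a₁ n \ E ∧ p.2 ∈ nbF hM a₂ n \ E) ∧
      (∀ x ∈ nbF hM a₁ n \ E, ∃ y, (x, y) ∈ S) ∧
      (∀ y ∈ nbF hM a₂ n \ E, ∃ x, (x, y) ∈ S) ∧
      (∀ x y y', (x, y) ∈ S → (x, y') ∈ S → y = y') ∧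
      (∀ x x' y, (x, y) ∈ S → (x', y) ∈ S → x = x') :=
    fun n hn => exists_pairing _ _ (hcardm n hn)
  set S : ℕ → Finset (M × M) := fun n => if h : n ≤ K then (hexS n h).choose else ∅ with hSdef
  have hS : ∀ n (h : n ≤ K),
      (∀ p ∈ S n, p.1 ∈ nbF hM a₁ n \ E ∧ p.2 ∈ nbF hM a₂ n \ E) ∧
      (∀ x ∈ nbF hM a₁ n \ E, ∃ y, (x, y) ∈ S n) ∧
      (∀ y ∈ nbF hM a₂ n \ E, ∃ x, (x, y) ∈ S n) ∧
      (∀ x y y', (x, y) ∈ S n → (x, y') ∈ S n → y = y') ∧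
      (∀ x x' y, (x, y) ∈ S n → (x', y) ∈ S n → x = x') := by
    intro n h
    rw [hSdef]; simp only [dif_pos h]
    exact (hexS n h).choose_spec
  have hW : ∀ {n w w'}, n ≤ K → (w, w') ∈ S n →
      w ∈ InM M n ∧ RM M a₁ w ∧ w ∉ E ∧ w' ∈ InM M n ∧ RM M a₂ w' ∧ w' ∉ E := by
    intro n w w' hn hmem
    obtain ⟨h1, h2⟩ := (hS n hn).1 _ hmem
    obtain ⟨h11, h12⟩ := Finset.mem_sdiff.1 h1
    obtain ⟨h21, h22⟩ := Finset.mem_sdiff.1 h2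
    have e1 := (mem_nbF hM h₁P).1 h11
    have e2 := (mem_nbF hM h₂P).1 h21
    exact ⟨e1.1, e1.2, h12, e2.1, e2.2, h22⟩
  -- no `P`-element of `E` is related to a new witness
  have hWnoR : ∀ {x : M}, x ∈ E → x ∈ PM M → ∀ {n w}, n ≤ K → w ∈ InM M n → w ∉ E →
      ¬ RM M x w := by
    intro x hx hxP n w hn hwn hwE hr
    have hxs : x ∈ supp := by
      rcases Finset.mem_union.1 hx with h | h
      · exact h
      · exact absurd (hFI h) (notI_of_P hM hxP)
    exact hwE (Finset.mem_union.2 (Or.inr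
      (hFwit x hxs hxP n hn w ((mem_nbF hM hxP).2 ⟨hwn, hr⟩))))
  refine ⟨E.image (fun x => (x, x)) ∪ {(a₁, a₂)} ∪ (Finset.range (K + 1)).biUnion S,
    ?_, ?_, ?_⟩
  swap
  · exact Finset.mem_union.2 (Or.inl (Finset.mem_union.2 (Or.inr (Finset.mem_singleton_self _))))
  swap
  · intro x hx
    exact Finset.mem_union.2 (Or.inl (Finset.mem_union.2 (Or.inl
      (Finset.mem_image.2 ⟨x, Finset.mem_union.2 (Or.inl hx), rfl⟩))))
  have memG : ∀ {p : M × M},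
      p ∈ E.image (fun x => (x, x)) ∪ {(a₁, a₂)} ∪ (Finset.range (K + 1)).biUnion S →
      (∃ x ∈ E, p = (x, x)) ∨ p = (a₁, a₂) ∨ ∃ n, n ≤ K ∧ p ∈ S n := by
    intro p hp
    rcases Finset.mem_union.1 hp with h | h
    · rcases Finset.mem_union.1 h with h | h
      · obtain ⟨x, hx, he⟩ := Finset.mem_image.1 h
        exact Or.inl ⟨x, hx, he.symm⟩
      · exact Or.inr (Or.inl (Finset.mem_singleton.1 h))
    · obtain ⟨n, hn, h2⟩ := Finset.mem_biUnion.1 h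
      exact Or.inr (Or.inr ⟨n, Nat.lt_succ_iff.1 (Finset.mem_range.1 hn), h2⟩)
  have memS : ∀ {n : ℕ} {p : M × M}, n ≤ K → p ∈ S n →
      p ∈ E.image (fun x => (x, x)) ∪ {(a₁, a₂)} ∪ (Finset.range (K + 1)).biUnion S := by
    intro n p hn hp
    exact Finset.mem_union.2 (Or.inr (Finset.mem_biUnion.2
      ⟨n, Finset.mem_range.2 (by omega), hp⟩))
  constructor
  · -- func
    intro x y y' h1 h2
    rcases memG h1 with ⟨u, hu, g1⟩ | g1 | ⟨n, hn, g1⟩ <;>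
      rcases memG h2 with ⟨u', hu', g2⟩ | g2 | ⟨m, hm, g2⟩
    · obtain ⟨e1, e2⟩ := pair_eq g1; obtain ⟨e3, e4⟩ := pair_eq g2
      subst e1; subst e2; subst e3; rw [← e4]
    · obtain ⟨e1, e2⟩ := pair_eq g1; obtain ⟨e3, e4⟩ := pair_eq g2
      subst e1; subst e3
      exact absurd hu ha₁E
    · obtain ⟨e1, e2⟩ := pair_eq g1
      subst e1; subst e2
      exact absurd hu ((hW hm g2).2.2.1)
    · obtain ⟨e1, e2⟩ := pair_eq g1; obtain ⟨e3, e4⟩ := pair_eq g2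
      subst e1; subst e3
      exact absurd hu' ha₁E
    · obtain ⟨e1, e2⟩ := pair_eq g1; obtain ⟨e3, e4⟩ := pair_eq g2
      rw [e2, e4]
    · obtain ⟨e1, e2⟩ := pair_eq g1
      subst e1; subst e2
      exact absurd h₁P (notP_of_I hM (hM.In_sub m (hW hm g2).1))
    · obtain ⟨e1, e2⟩ := pair_eq g2
      subst e1; subst e2
      exact absurd hu' ((hW hn g1).2.2.1)
    · obtain ⟨e1, e2⟩ := pair_eq g2
      subst e1; subst e2
      exact absurd h₁P (notP_of_I hM (hM.In_sub n (hW hn g1).1))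
    · have hnm : n = m := In_unique hM (hW hn g1).1 (hW hm g2).1
      subst hnm
      exact (hS n hn).2.2.2.1 x y y' g1 g2
  · -- inj
    intro x x' y h1 h2
    rcases memG h1 with ⟨u, hu, g1⟩ | g1 | ⟨n, hn, g1⟩ <;>
      rcases memG h2 with ⟨u', hu', g2⟩ | g2 | ⟨m, hm, g2⟩
    · obtain ⟨e1, e2⟩ := pair_eq g1; obtain ⟨e3, e4⟩ := pair_eq g2
      subst e1; subst e2; subst e4; rw [e3]
    · obtain ⟨e1, e2⟩ := pair_eq g1; obtain ⟨e3, e4⟩ := pair_eq g2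
      subst e2; subst e4; subst e1
      exact absurd hu ha₂E
    · obtain ⟨e1, e2⟩ := pair_eq g1
      subst e1; subst e2
      exact absurd hu ((hW hm g2).2.2.2.2.2)
    · obtain ⟨e1, e2⟩ := pair_eq g1; obtain ⟨e3, e4⟩ := pair_eq g2
      subst e2; subst e4; subst e3
      exact absurd hu' ha₂E
    · obtain ⟨e1, e2⟩ := pair_eq g1; obtain ⟨e3, e4⟩ := pair_eq g2
      rw [e1, e3]
    · obtain ⟨e1, e2⟩ := pair_eq g1
      subst e2
      exact absurd h₂P (notP_of_I hM (hM.In_sub m (hW hm g2).2.2.2.1))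
    · obtain ⟨e1, e2⟩ := pair_eq g2
      subst e1; subst e2
      exact absurd hu' ((hW hn g1).2.2.2.2.2)
    · obtain ⟨e1, e2⟩ := pair_eq g2
      subst e2
      exact absurd h₂P (notP_of_I hM (hM.In_sub n (hW hn g1).2.2.2.1))
    · have hnm : n = m := In_unique hM (hW hn g1).2.2.2.1 (hW hm g2).2.2.2.1
      subst hnm
      exact (hS n hn).2.2.2.2 x x' y g1 g2
  · -- presP
    intro x y h1
    rcases memG h1 with ⟨u, hu, g1⟩ | g1 | ⟨n, hn, g1⟩
    · obtain ⟨e1, e2⟩ := pair_eq g1; subst e1; subst e2; exact Iff.rfl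
    · obtain ⟨e1, e2⟩ := pair_eq g1; subst e1; subst e2; exact iff_of_true h₁P h₂P
    · exact iff_of_false (notP_of_I hM (hM.In_sub n (hW hn g1).1))
        (notP_of_I hM (hM.In_sub n (hW hn g1).2.2.2.1))
  · -- presIn
    intro m hm x y h1
    rcases memG h1 with ⟨u, hu, g1⟩ | g1 | ⟨n, hn, g1⟩
    · obtain ⟨e1, e2⟩ := pair_eq g1; subst e1; subst e2; exact Iff.rfl
    · obtain ⟨e1, e2⟩ := pair_eq g1; subst e1; subst e2
      exact iff_of_false (notIn_of_P hM h₁P m) (notIn_of_P hM h₂P m)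
    · by_cases hmn : m = n
      · subst hmn
        exact iff_of_true (hW hn g1).1 (hW hn g1).2.2.2.1
      · exact iff_of_false (fun h => hmn (In_unique hM h (hW hn g1).1))
          (fun h => hmn (In_unique hM h (hW hn g1).2.2.2.1))
  · -- presR
    intro x y x' y' h1 h2
    rcases memG h1 with ⟨u, hu, g1⟩ | g1 | ⟨n, hn, g1⟩ <;>
      rcases memG h2 with ⟨u', hu', g2⟩ | g2 | ⟨m, hm, g2⟩
    · obtain ⟨e1, e2⟩ := pair_eq g1; obtain ⟨e3, e4⟩ := pair_eq g2
      subst e1; subst e2; subst e3; subst e4; exact Iff.rfl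
    · obtain ⟨e1, e2⟩ := pair_eq g1; obtain ⟨e3, e4⟩ := pair_eq g2
      subst e1; subst e2; subst e3; subst e4
      exact iff_of_false (notR_right_P hM h₁P) (notR_right_P hM h₂P)
    · obtain ⟨e1, e2⟩ := pair_eq g1
      rw [e1, e2]
      by_cases hxP : u ∈ PM M
      · exact iff_of_false
          (hWnoR hu hxP hm (hW hm g2).1 (hW hm g2).2.2.1)
          (hWnoR hu hxP hm (hW hm g2).2.2.2.1 (hW hm g2).2.2.2.2.2)
      · exact iff_of_false (notR_of_I_left hM (I_of_notP hM hxP))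
          (notR_of_I_left hM (I_of_notP hM hxP))
    · obtain ⟨e1, e2⟩ := pair_eq g1; obtain ⟨e3, e4⟩ := pair_eq g2
      subst e1; subst e2
      rw [e3, e4]
      by_cases huI : u' ∈ IM M
      · exact hpatE u' hu' huI
      · exact iff_of_false (notR_right_P hM ((hM.part u').2 huI))
          (notR_right_P hM ((hM.part u').2 huI))
    · obtain ⟨e1, e2⟩ := pair_eq g1; obtain ⟨e3, e4⟩ := pair_eq g2
      subst e1; subst e2; subst e3; subst e4
      exact iff_of_false (notR_right_P hM h₁P) (notR_right_P hM h₂P)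
    · obtain ⟨e1, e2⟩ := pair_eq g1
      subst e1; subst e2
      exact iff_of_true (hW hm g2).2.1 (hW hm g2).2.2.2.2.1
    · obtain ⟨e1, e2⟩ := pair_eq g2
      subst e1; subst e2
      exact iff_of_false (notR_of_I_left hM (hM.In_sub n (hW hn g1).1))
        (notR_of_I_left hM (hM.In_sub n (hW hn g1).2.2.2.1))
    · obtain ⟨e1, e2⟩ := pair_eq g2
      subst e1; subst e2
      exact iff_of_false (notR_of_I_left hM (hM.In_sub n (hW hn g1).1))
        (notR_of_I_left hM (hM.In_sub n (hW hn g1).2.2.2.1))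
    · exact iff_of_false (notR_of_I_left hM (hM.In_sub n (hW hn g1).1))
        (notR_of_I_left hM (hM.In_sub n (hW hn g1).2.2.2.1))
  · -- closL
    intro x y h1 hx n hn w hw hr
    rcases memG h1 with ⟨u, hu, g1⟩ | g1 | ⟨m, hm, g1⟩
    · obtain ⟨e1, e2⟩ := pair_eq g1
      have hxE : x ∈ E := by rw [e1]; exact hu
      have hxs : x ∈ supp := by
        rcases Finset.mem_union.1 hxE with h | h
        · exact h
        · exact absurd (hFI h) (notI_of_P hM hx)
      have hwF : w ∈ Fset := hFwit x hxs hx n hn w ((mem_nbF hM hx).2 ⟨hw, hr⟩)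
      exact ⟨w, Finset.mem_union.2 (Or.inl (Finset.mem_union.2 (Or.inl
        (Finset.mem_image.2 ⟨w, Finset.mem_union.2 (Or.inr hwF), rfl⟩))))⟩
    · obtain ⟨e1, e2⟩ := pair_eq g1
      subst e1; subst e2
      have hwnb : w ∈ nbF hM x n := (mem_nbF hM hx).2 ⟨hw, hr⟩
      by_cases hwE : w ∈ E
      · exact ⟨w, Finset.mem_union.2 (Or.inl (Finset.mem_union.2 (Or.inl
          (Finset.mem_image.2 ⟨w, hwE, rfl⟩))))⟩
      · obtain ⟨w', hw'⟩ := (hS n hn).2.1 w (Finset.mem_sdiff.2 ⟨hwnb, hwE⟩)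
        exact ⟨w', memS hn hw'⟩
    · exact absurd hx (notP_of_I hM (hM.In_sub m (hW hm g1).1))
  · -- closR
    intro x y h1 hy n hn w hw hr
    rcases memG h1 with ⟨u, hu, g1⟩ | g1 | ⟨m, hm, g1⟩
    · obtain ⟨e1, e2⟩ := pair_eq g1
      have hyE : y ∈ E := by rw [e2]; exact hu
      have hxs : y ∈ supp := by
        rcases Finset.mem_union.1 hyE with h | h
        · exact h
        · exact absurd (hFI h) (notI_of_P hM hy)
      have hwF : w ∈ Fset := hFwit y hxs hy n hn w ((mem_nbF hM hy).2 ⟨hw, hr⟩)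
      exact ⟨w, Finset.mem_union.2 (Or.inl (Finset.mem_union.2 (Or.inl
        (Finset.mem_image.2 ⟨w, Finset.mem_union.2 (Or.inr hwF), rfl⟩))))⟩
    · obtain ⟨e1, e2⟩ := pair_eq g1
      subst e1; subst e2
      have hwnb : w ∈ nbF hM y n := (mem_nbF hM hy).2 ⟨hw, hr⟩
      by_cases hwE : w ∈ E
      · exact ⟨w, Finset.mem_union.2 (Or.inl (Finset.mem_union.2 (Or.inl
          (Finset.mem_image.2 ⟨w, hwE, rfl⟩))))⟩
      · obtain ⟨w', hw'⟩ := (hS n hn).2.2.1 w (Finset.mem_sdiff.2 ⟨hwnb, hwE⟩)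
        exact ⟨w', memS hn hw'⟩
    · exact absurd hy (notP_of_I hM (hM.In_sub m (hW hm g1).2.2.2.1))
  · -- highL
    intro n hn
    have hsub : (E.image (fun x => (x, x)) ∪ {(a₁, a₂)} ∪
        (Finset.range (K + 1)).biUnion S).filter (fun p => p.1 ∈ InM M n) ⊆
        (supp.filter (· ∈ InM M n)).image (fun x => (x, x)) := by
      intro p hp
      obtain ⟨hp1, hp2⟩ := Finset.mem_filter.1 hp
      rcases memG hp1 with ⟨u, hu, g1⟩ | g1 | ⟨m, hm, g1⟩
      · subst g1
        have husupp : u ∈ supp := by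
          rcases Finset.mem_union.1 hu with h | h
          · exact h
          · rcases hFlow u h with h' | ⟨m, hm, hum⟩
            · exact h'
            · exact absurd (In_unique hM hp2 hum) (by omega)
        exact Finset.mem_image.2 ⟨u, Finset.mem_filter.2 ⟨husupp, hp2⟩, rfl⟩
      · subst g1
        exact absurd hp2 (notIn_of_P hM h₁P n)
      · have hfst : p.1 ∈ InM M m := by
          have hp' : p = (p.1, p.2) := rfl
          rw [hp'] at g1
          exact (hW hm g1).1
        exact absurd (In_unique hM hp2 hfst) (by omega)
    have h1 := Finset.card_le_card hsub
    have h2 : ((supp.filter (· ∈ InM M n)).image (fun x => (x, x))).card ≤ supp.card :=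
      le_trans Finset.card_image_le (Finset.card_le_card (Finset.filter_subset _ _))
    omega
  · -- highR
    intro n hn
    have hsub : (E.image (fun x => (x, x)) ∪ {(a₁, a₂)} ∪
        (Finset.range (K + 1)).biUnion S).filter (fun p => p.2 ∈ InM M n) ⊆
        (supp.filter (· ∈ InM M n)).image (fun x => (x, x)) := by
      intro p hp
      obtain ⟨hp1, hp2⟩ := Finset.mem_filter.1 hp
      rcases memG hp1 with ⟨u, hu, g1⟩ | g1 | ⟨m, hm, g1⟩
      · subst g1
        have husupp : u ∈ supp := by
          rcases Finset.mem_union.1 hu with h | h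
          · exact h
          · rcases hFlow u h with h' | ⟨m, hm, hum⟩
            · exact h'
            · exact absurd (In_unique hM hp2 hum) (by omega)
        exact Finset.mem_image.2 ⟨u, Finset.mem_filter.2 ⟨husupp, hp2⟩, rfl⟩
      · subst g1
        exact absurd hp2 (notIn_of_P hM h₂P n)
      · have hsnd : p.2 ∈ InM M m := by
          have hp' : p = (p.1, p.2) := rfl
          rw [hp'] at g1
          exact (hW hm g1).2.2.2.1
        exact absurd (In_unique hM hp2 hsnd) (by omega)
    have h1 := Finset.card_le_card hsub
    have h2 : ((supp.filter (· ∈ InM M n)).image (fun x => (x, x))).card ≤ supp.card :=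
      le_trans Finset.card_image_le (Finset.card_le_card (Finset.filter_subset _ _))
    omega

end SecE
section SecF
open scoped Classical

variable {M : Type u} [Lcas.Structure M]

lemma ncard_le_of_mk_le {S : Set M} {n : ℕ} (h : #↥S ≤ (n : Cardinal)) : S.ncard ≤ n := by
  have h2 := Cardinal.toNat_le_toNat h (Cardinal.nat_lt_aleph0 n)
  rwa [Cardinal.toNat_natCast] at h2

lemma finite_of_mk_le {S : Set M} {n : ℕ} (h : #↥S ≤ (n : Cardinal)) : S.Finite :=
  Cardinal.lt_aleph0_iff_set_finite.1 (lt_of_le_of_lt h (Cardinal.nat_lt_aleph0 n))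

-- membership lemmas for `typeB`
lemma mem_typeB_fP {B : Set M} : fP M ∈ typeB B :=
  Or.inl (Or.inl (Or.inl rfl))

lemma mem_typeB_fNe {B : Set M} {a : M} (ha : a ∈ PM M) : fNe a ∈ typeB B :=
  Or.inl (Or.inl (Or.inr ⟨a, ha, rfl⟩))

lemma mem_typeB_R {B : Set M} {b : M} (hb : b ∈ B) : fRright b ∈ typeB B :=
  Or.inl (Or.inr ⟨b, hb, rfl⟩)

lemma mem_typeB_notR {B : Set M} {b : M} (hb : b ∈ IM M \ B) : (fRright b).not ∈ typeB B :=
  Or.inr ⟨b, hb, rfl⟩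

lemma typeB_cases {B : Set M} {φ : Lcas.Formula (M ⊕ Fin 1)} (h : φ ∈ typeB B) :
    φ = fP M ∨ (∃ a ∈ PM M, φ = fNe a) ∨ (∃ b ∈ B, φ = fRright b) ∨
      ∃ b ∈ IM M \ B, φ = (fRright b).not := by
  rcases h with ((h | h) | h) | h
  · exact Or.inl h
  · exact Or.inr (Or.inl h)
  · exact Or.inr (Or.inr (Or.inl h))
  · exact Or.inr (Or.inr (Or.inr h))

/-- The extraction of parameters of a formula. -/
noncomputable def suppM (φ : Lcas.Formula (M ⊕ Fin 1)) : Finset M :=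
  φ.freeVarFinset.biUnion
    (fun a => match a with
      | Sum.inl m => {m}
      | Sum.inr _ => (∅ : Finset M))

lemma mem_suppM {φ : Lcas.Formula (M ⊕ Fin 1)} {m : M} :
    m ∈ suppM φ ↔ Sum.inl m ∈ φ.freeVarFinset := by
  constructor
  · intro h
    obtain ⟨a, ha, hm⟩ := Finset.mem_biUnion.1 h
    match a with
    | Sum.inl m' =>
      rw [Finset.mem_singleton.1 hm]
      exact ha
    | Sum.inr k => exact absurd hm (Finset.notMem_empty m)
  · intro h
    exact Finset.mem_biUnion.2 ⟨Sum.inl m, h, Finset.mem_singleton_self m⟩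

/-- The key lemma: `typeB B` decides every formula. -/
lemma typeB_decides (hM : IsTcasModel M) {B : Set M} (hBI : B ⊆ IM M)
    (φ : Lcas.Formula (M ⊕ Fin 1)) :
    ∃ s : Finset (Lcas.Formula (M ⊕ Fin 1)), ↑s ⊆ typeB B ∧
      ∀ a₁ a₂ : M, (∀ ψ ∈ s, RealizesAt M ψ a₁) → (∀ ψ ∈ s, RealizesAt M ψ a₂) →
        (RealizesAt M φ a₁ ↔ RealizesAt M φ a₂) := by
  set r : ℕ := qd φ with hr
  set sp : Finset M := suppM φ with hsp
  set K : ℕ := maxRel φ + sp.card + r + 1 with hK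
  set Fset : Finset M := sp.filter (· ∈ IM M) ∪
    (sp.filter (· ∈ PM M)).biUnion
      (fun p => (Finset.range (K + 1)).biUnion (fun n => nbF hM p n)) with hFset
  have hFI : ↑Fset ⊆ IM M := by
    intro b hb
    rcases Finset.mem_union.1 (by exact_mod_cast hb) with h | h
    · exact (Finset.mem_filter.1 h).2
    · obtain ⟨p, hp, h2⟩ := Finset.mem_biUnion.1 h
      obtain ⟨n, hn, h3⟩ := Finset.mem_biUnion.1 h2
      exact hM.In_sub n ((mem_nbF hM (Finset.mem_filter.1 hp).2).1 h3).1
  set s : Finset (Lcas.Formula (M ⊕ Fin 1)) :=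
    {fP M} ∪ (sp.filter (· ∈ PM M)).image fNe ∪
      (Fset.filter (fun b => b ∈ B)).image fRright ∪
      (Fset.filter (fun b => b ∉ B)).image (fun b => (fRright b).not) with hs
  refine ⟨s, ?_, ?_⟩
  · intro ψ hψ
    rcases Finset.mem_union.1 (by exact_mod_cast hψ) with h | h
    · rcases Finset.mem_union.1 h with h | h
      · rcases Finset.mem_union.1 h with h | h
        · rw [Finset.mem_singleton.1 h]
          exact mem_typeB_fP
        · obtain ⟨p, hp, he⟩ := Finset.mem_image.1 h
          rw [← he]
          exact mem_typeB_fNe (Finset.mem_filter.1 hp).2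
      · obtain ⟨b, hb, he⟩ := Finset.mem_image.1 h
        rw [← he]
        exact mem_typeB_R (Finset.mem_filter.1 hb).2
    · obtain ⟨b, hb, he⟩ := Finset.mem_image.1 h
      rw [← he]
      exact mem_typeB_notR ⟨hFI (Finset.mem_filter.1 hb).1, (Finset.mem_filter.1 hb).2⟩
  · intro a₁ a₂ hr₁ hr₂
    -- extract the semantic facts from the realizations
    have h₁P : a₁ ∈ PM M := realizesAt_fP.1 (hr₁ (fP M) (by
      rw [hs]
      exact Finset.mem_union.2 (Or.inl (Finset.mem_union.2 (Or.inl (Finset.mem_union.2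
        (Or.inl (Finset.mem_singleton_self _))))))))
    have h₂P : a₂ ∈ PM M := realizesAt_fP.1 (hr₂ (fP M) (by
      rw [hs]
      exact Finset.mem_union.2 (Or.inl (Finset.mem_union.2 (Or.inl (Finset.mem_union.2
        (Or.inl (Finset.mem_singleton_self _))))))))
    have hne : ∀ p ∈ sp, p ∈ PM M → a₁ ≠ p ∧ a₂ ≠ p := by
      intro p hp hpP
      have hmem : fNe p ∈ s := by
        rw [hs]
        exact Finset.mem_union.2 (Or.inl (Finset.mem_union.2 (Or.inl (Finset.mem_union.2
          (Or.inr (Finset.mem_image.2 ⟨p, Finset.mem_filter.2 ⟨hp, hpP⟩, rfl⟩))))))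
      exact ⟨realizesAt_fNe.1 (hr₁ _ hmem), realizesAt_fNe.1 (hr₂ _ hmem)⟩
    have hpat : ∀ b ∈ Fset, (RM M a₁ b ↔ RM M a₂ b) := by
      intro b hb
      by_cases hbB : b ∈ B
      · have hmem : fRright b ∈ s := by
          rw [hs]
          exact Finset.mem_union.2 (Or.inl (Finset.mem_union.2 (Or.inr
            (Finset.mem_image.2 ⟨b, Finset.mem_filter.2 ⟨hb, hbB⟩, rfl⟩))))
        exact iff_of_true (realizesAt_fRright.1 (hr₁ _ hmem))
          (realizesAt_fRright.1 (hr₂ _ hmem))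
      · have hmem : (fRright b).not ∈ s := by
          rw [hs]
          exact Finset.mem_union.2 (Or.inr
            (Finset.mem_image.2 ⟨b, Finset.mem_filter.2 ⟨hb, hbB⟩, rfl⟩))
        exact iff_of_false (fun hrr => (realizesAt_not.1 (hr₁ _ hmem))
            (realizesAt_fRright.2 hrr))
          (fun hrr => (realizesAt_not.1 (hr₂ _ hmem)) (realizesAt_fRright.2 hrr))
    -- build the base partial isomorphism and conclude by `ef_main`
    obtain ⟨G₀, hGood, hpair, hid⟩ := base_good hM K r sp Fset hFI
      (fun x hx hxI => Finset.mem_union.2 (Or.inl (Finset.mem_filter.2 ⟨hx, hxI⟩)))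
      (fun p hp hpP n hn w hw => Finset.mem_union.2 (Or.inr (Finset.mem_biUnion.2
        ⟨p, Finset.mem_filter.2 ⟨hp, hpP⟩, Finset.mem_biUnion.2
          ⟨n, Finset.mem_range.2 (by omega), hw⟩⟩)))
      (by
        intro w hw
        rcases Finset.mem_union.1 hw with h | h
        · exact Or.inl (Finset.mem_filter.1 h).1
        · obtain ⟨p, hp, h2⟩ := Finset.mem_biUnion.1 h
          obtain ⟨n, hn, h3⟩ := Finset.mem_biUnion.1 h2
          exact Or.inr ⟨n, Nat.lt_succ_iff.1 (Finset.mem_range.1 hn),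
            ((mem_nbF hM (Finset.mem_filter.1 hp).2).1 h3).1⟩)
      (by omega) h₁P h₂P hne hpat
    have := ef_main hM K φ r G₀ hGood (le_refl r) (by omega) (by omega)
      (Sum.elim id (fun _ => a₁)) (Sum.elim id (fun _ => a₂))
      (fun i => i.elim0) (fun i => i.elim0)
      (by
        intro a ha
        match a with
        | Sum.inl m =>
          exact hid m (mem_suppM.2 ha)
        | Sum.inr k => exact hpair)
      (fun i => i.elim0)
    exact this

/-- `typeB B` is finitely satisfiable. -/
lemma typeB_finSat (hM : IsTcasModel M) {B : Set M} (hBI : B ⊆ IM M)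
    (hBc : ∀ n : ℕ, #(↥(B ∩ InM M n)) ≤ (n : Cardinal)) : FinSatIn M (typeB B) := by
  intro s hs
  set F₁ : Finset M := s.biUnion
    (fun ψ => if h : ∃ b ∈ B, ψ = fRright b then {h.choose} else ∅) with hF₁
  set F₀ : Finset M := s.biUnion
    (fun ψ => if h : ∃ b ∈ IM M \ B, ψ = (fRright b).not then {h.choose} else ∅) with hF₀
  set A : Finset M := s.biUnion
    (fun ψ => if h : ∃ a ∈ PM M, ψ = fNe a then {h.choose} else ∅) with hA
  have hF₁B : ∀ b ∈ F₁, b ∈ B := by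
    intro b hb
    obtain ⟨ψ, hψ, h2⟩ := Finset.mem_biUnion.1 hb
    by_cases h : ∃ b ∈ B, ψ = fRright b
    · rw [dif_pos h] at h2
      rw [Finset.mem_singleton.1 h2]
      exact h.choose_spec.1
    · rw [dif_neg h] at h2
      exact absurd h2 (Finset.notMem_empty b)
  have hF₀IB : ∀ b ∈ F₀, b ∈ IM M \ B := by
    intro b hb
    obtain ⟨ψ, hψ, h2⟩ := Finset.mem_biUnion.1 hb
    by_cases h : ∃ b ∈ IM M \ B, ψ = (fRright b).not
    · rw [dif_pos h] at h2
      rw [Finset.mem_singleton.1 h2]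
      exact h.choose_spec.1
    · rw [dif_neg h] at h2
      exact absurd h2 (Finset.notMem_empty b)
  have hAP : ∀ a ∈ A, a ∈ PM M := by
    intro a ha
    obtain ⟨ψ, hψ, h2⟩ := Finset.mem_biUnion.1 ha
    by_cases h : ∃ a ∈ PM M, ψ = fNe a
    · rw [dif_pos h] at h2
      rw [Finset.mem_singleton.1 h2]
      exact h.choose_spec.1
    · rw [dif_neg h] at h2
      exact absurd h2 (Finset.notMem_empty a)
  have hF₁I : ↑F₁ ⊆ IM M := fun b hb => hBI (hF₁B b (by exact_mod_cast hb))
  have hF₀I : ↑F₀ ⊆ IM M := fun b hb => (hF₀IB b (by exact_mod_cast hb)).1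
  -- an element of `P` avoiding `F₀ ∪ F₁`
  obtain ⟨a₀, ha₀P, ha₀⟩ := exists_P_avoid hM (F₁ ∪ F₀)
    (by
      intro b hb
      rcases Finset.mem_union.1 (by exact_mod_cast hb) with h | h
      · exact hF₁I (by exact_mod_cast h)
      · exact hF₀I (by exact_mod_cast h))
  -- a distinguished element related to everything in `A ∪ {a₀}`
  obtain ⟨bp, hbpI, hbp1, -⟩ := hM.ext_I ∅ (insert a₀ A) (by simp)
    (by
      rw [Finset.coe_insert]
      exact Set.insert_subset ha₀P (fun a ha => hAP a (by exact_mod_cast ha)))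
    (by simp)
  have hbpa₀ : RM M a₀ bp := hbp1 a₀ (Finset.mem_insert_self _ _)
  have hbpF₁ : bp ∉ F₁ := fun h => ha₀ bp (Finset.mem_union.2 (Or.inl h)) hbpa₀
  -- the witness
  obtain ⟨a, haP, ha1, ha0⟩ := hM.ext_P (F₀ ∪ {bp}) F₁
    (by
      intro b hb
      rcases Finset.mem_union.1 (by exact_mod_cast hb) with h | h
      · exact hF₀I (by exact_mod_cast h)
      · rw [Finset.mem_singleton.1 h]; exact hbpI)
    hF₁I
    (by
      rw [Finset.disjoint_left]
      intro b hb hb1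
      rcases Finset.mem_union.1 hb with h | h
      · exact (hF₀IB b h).2 (hF₁B b hb1)
      · rw [Finset.mem_singleton.1 h] at hb1
        exact hbpF₁ hb1)
    (by
      intro n
      have hsub : (↑F₁ : Set M) ∩ InM M n ⊆ B ∩ InM M n := by
        intro b hb
        exact ⟨hF₁B b (by exact_mod_cast hb.1), hb.2⟩
      have hfin : (B ∩ InM M n).Finite := finite_of_mk_le (hBc n)
      exact le_trans (Set.ncard_le_ncard hsub hfin) (ncard_le_of_mk_le (hBc n)))
  have haA : ∀ p ∈ A, a ≠ p := by
    intro p hp he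
    have h1 : RM M p bp := hbp1 p (Finset.mem_insert_of_mem hp)
    have h2 : ¬ RM M a bp := ha0 bp (Finset.mem_union.2 (Or.inr (Finset.mem_singleton_self _)))
    rw [he] at h2
    exact h2 h1
  refine ⟨a, ?_⟩
  intro ψ hψ
  rcases typeB_cases (hs hψ) with h | ⟨p, hpP, he⟩ | ⟨b, hbB, he⟩ | ⟨b, hbIB, he⟩
  · rw [h]
    exact realizesAt_fP.2 haP
  · have hex : ∃ a' ∈ PM M, ψ = fNe a' := ⟨p, hpP, he⟩
    have hc : hex.choose ∈ A := by
      rw [hA]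
      refine Finset.mem_biUnion.2 ⟨ψ, hψ, ?_⟩
      rw [dif_pos hex]
      exact Finset.mem_singleton_self _
    rw [hex.choose_spec.2]
    exact realizesAt_fNe.2 (haA _ hc)
  · have hex : ∃ b' ∈ B, ψ = fRright b' := ⟨b, hbB, he⟩
    have hc : hex.choose ∈ F₁ := by
      rw [hF₁]
      refine Finset.mem_biUnion.2 ⟨ψ, hψ, ?_⟩
      rw [dif_pos hex]
      exact Finset.mem_singleton_self _
    rw [hex.choose_spec.2]
    exact realizesAt_fRright.2 (ha1 _ hc)
  · have hex : ∃ b' ∈ IM M \ B, ψ = (fRright b').not := ⟨b, hbIB, he⟩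
    have hc : hex.choose ∈ F₀ := by
      rw [hF₀]
      refine Finset.mem_biUnion.2 ⟨ψ, hψ, ?_⟩
      rw [dif_pos hex]
      exact Finset.mem_singleton_self _
    rw [hex.choose_spec.2]
    rw [realizesAt_not, realizesAt_fRright]
    exact ha0 _ (Finset.mem_union.2 (Or.inl hc))

end SecF
section SecG
open scoped Classical

variable {M : Type u} [Lcas.Structure M]

lemma chain_finset_subset {α : Type*} {c : Set (Set α)} (hc : IsChain (· ⊆ ·) c)
    (hne : c.Nonempty) : ∀ s : Finset α, ↑s ⊆ ⋃₀ c → ∃ t ∈ c, ↑s ⊆ t := by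
  intro s
  induction s using Finset.induction_on with
  | empty =>
    intro _
    exact ⟨hne.choose, hne.choose_spec, by simp⟩
  | @insert a s ha ih =>
    intro hs
    obtain ⟨t, htc, hst⟩ := ih (fun x hx => hs (by
      rw [Finset.coe_insert]
      exact Set.mem_insert_of_mem _ hx))
    obtain ⟨t', ht'c, hat'⟩ := hs (by
      rw [Finset.coe_insert]
      exact Set.mem_insert _ _)
    rcases hc.total htc ht'c with h | h
    · refine ⟨t', ht'c, ?_⟩
      intro x hx
      rcases Finset.mem_insert.1 (Finset.mem_coe.1 hx) with e | e
      · rw [e]; exact hat'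
      · exact h (hst (Finset.mem_coe.2 e))
    · refine ⟨t, htc, ?_⟩
      intro x hx
      rcases Finset.mem_insert.1 (Finset.mem_coe.1 hx) with e | e
      · rw [e]; exact h hat'
      · exact hst (Finset.mem_coe.2 e)

lemma exists_complete_ext (p : Set (Lcas.Formula (M ⊕ Fin 1))) (hp : FinSatIn M p) :
    ∃ q, IsCompleteTypeOver M q ∧ p ⊆ q := by
  obtain ⟨m, hpm, hmax⟩ := zorn_subset_nonempty {q | p ⊆ q ∧ FinSatIn M q}
    (by
      intro c hcS hchain hcne
      refine ⟨⋃₀ c, ⟨?_, ?_⟩, fun t ht => Set.subset_sUnion_of_mem ht⟩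
      · obtain ⟨t, htc⟩ := hcne
        exact subset_trans (hcS htc).1 (Set.subset_sUnion_of_mem htc)
      · intro s hs
        obtain ⟨t, htc, hst⟩ := chain_finset_subset hchain hcne s hs
        exact (hcS htc).2 s hst)
    p ⟨subset_rfl, hp⟩
  refine ⟨m, ⟨hmax.prop.2, ?_⟩, hpm⟩
  intro q hq hsub
  exact subset_antisymm (hmax.2 ⟨subset_trans hpm hsub, hq⟩ hsub) hsub

lemma complete_mem_of {q : Set (Lcas.Formula (M ⊕ Fin 1))} (hq : IsCompleteTypeOver M q)
    {φ : Lcas.Formula (M ⊕ Fin 1)} (hfs : FinSatIn M (q ∪ {φ})) : φ ∈ q := by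
  have := hq.2 (q ∪ {φ}) hfs Set.subset_union_left
  rw [← this]
  exact Set.mem_union_right _ rfl

lemma complete_or {q : Set (Lcas.Formula (M ⊕ Fin 1))} (hq : IsCompleteTypeOver M q)
    (φ : Lcas.Formula (M ⊕ Fin 1)) : φ ∈ q ∨ φ.not ∈ q := by
  by_contra h
  push_neg at h
  obtain ⟨h1, h2⟩ := h
  have hn1 : ¬ FinSatIn M (q ∪ {φ}) := fun hf => h1 (complete_mem_of hq hf)
  have hn2 : ¬ FinSatIn M (q ∪ {φ.not}) := fun hf => h2 (complete_mem_of hq hf)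
  rw [FinSatIn] at hn1 hn2
  push_neg at hn1 hn2
  obtain ⟨s₁, hs₁, hw₁⟩ := hn1
  obtain ⟨s₂, hs₂, hw₂⟩ := hn2
  obtain ⟨a, ha⟩ := hq.1 ((s₁.erase φ) ∪ (s₂.erase φ.not)) (by
    intro ψ hψ
    rcases Finset.mem_union.1 (Finset.mem_coe.1 (by exact_mod_cast hψ)) with h | h
    · obtain ⟨hne, hmem⟩ := Finset.mem_erase.1 h
      rcases hs₁ (Finset.mem_coe.2 hmem) with h' | h'
      · exact h'
      · exact absurd h' hne
    · obtain ⟨hne, hmem⟩ := Finset.mem_erase.1 h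
      rcases hs₂ (Finset.mem_coe.2 hmem) with h' | h'
      · exact h'
      · exact absurd h' hne)
  by_cases hφ : RealizesAt M φ a
  · obtain ⟨ψ, hψ, hnr⟩ := hw₁ a
    apply hnr
    by_cases he : ψ = φ
    · rw [he]; exact hφ
    · exact ha ψ (Finset.mem_union.2 (Or.inl (Finset.mem_erase.2 ⟨he, hψ⟩)))
  · obtain ⟨ψ, hψ, hnr⟩ := hw₂ a
    apply hnr
    by_cases he : ψ = φ.not
    · rw [he]; exact realizesAt_not.2 hφ
    · exact ha ψ (Finset.mem_union.2 (Or.inr (Finset.mem_erase.2 ⟨he, hψ⟩)))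

lemma complete_not_both {q : Set (Lcas.Formula (M ⊕ Fin 1))} (hq : IsCompleteTypeOver M q)
    {φ : Lcas.Formula (M ⊕ Fin 1)} (h1 : φ ∈ q) (h2 : φ.not ∈ q) : False := by
  obtain ⟨a, ha⟩ := hq.1 {φ, φ.not} (by
    intro ψ hψ
    rcases Finset.mem_insert.1 (by exact_mod_cast hψ) with h | h
    · rw [h]; exact h1
    · rw [Finset.mem_singleton.1 h]; exact h2)
  exact realizesAt_not.1 (ha φ.not (Finset.mem_insert_of_mem (Finset.mem_singleton_self _)))
    (ha φ (Finset.mem_insert_self _ _))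

lemma typeB_ext_eq (hM : IsTcasModel M) {B : Set M} (hBI : B ⊆ IM M)
    {q₁ q₂ : Set (Lcas.Formula (M ⊕ Fin 1))}
    (h₁ : IsCompleteTypeOver M q₁) (hs₁ : typeB B ⊆ q₁)
    (h₂ : IsCompleteTypeOver M q₂) (hs₂ : typeB B ⊆ q₂) : q₁ = q₂ := by
  have hsub : q₁ ⊆ q₂ := by
    intro φ hφ
    by_contra hn
    have hnot : φ.not ∈ q₂ := (complete_or h₂ φ).resolve_left hn
    obtain ⟨s, hsubs, hagree⟩ := typeB_decides hM hBI φ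
    obtain ⟨a₁, ha₁⟩ := h₁.1 (insert φ s) (by
      intro ψ hψ
      rcases Finset.mem_insert.1 (by exact_mod_cast hψ) with h | h
      · rw [h]; exact hφ
      · exact hs₁ (hsubs (Finset.mem_coe.2 h)))
    obtain ⟨a₂, ha₂⟩ := h₂.1 (insert φ.not s) (by
      intro ψ hψ
      rcases Finset.mem_insert.1 (by exact_mod_cast hψ) with h | h
      · rw [h]; exact hnot
      · exact hs₂ (hsubs (Finset.mem_coe.2 h)))
    have hag := hagree a₁ a₂ (fun ψ hψ => ha₁ ψ (Finset.mem_insert_of_mem hψ))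
      (fun ψ hψ => ha₂ ψ (Finset.mem_insert_of_mem hψ))
    exact realizesAt_not.1 (ha₂ φ.not (Finset.mem_insert_self _ _))
      (hag.1 (ha₁ φ (Finset.mem_insert_self _ _)))
  exact (h₁.2 q₂ h₂.1 hsub).symm

end SecG

/-- for each `B ⊆ I^M` with `|B ∩ I_n^M| ≤ n` for all `n`, `p_B` is finitely
satisfiable in `M` and has a unique extension to a complete 1-type over `M`; and every
nonalgebraic complete 1-type over `M` containing `P(x)` arises this way from a unique
such `B`. -/
theorem stmt8 (M : Type u) [Lcas.Structure M] (hM : IsTcasModel M) :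
    (∀ B : Set M, B ⊆ IM M → (∀ n : ℕ, #(↥(B ∩ InM M n)) ≤ (n : Cardinal)) →
      FinSatIn M (typeB B) ∧
      ∃! q : Set (Lcas.Formula (M ⊕ Fin 1)), IsCompleteTypeOver M q ∧ typeB B ⊆ q) ∧
    ∀ q : Set (Lcas.Formula (M ⊕ Fin 1)), IsCompleteTypeOver M q → IsNonalgebraic M q →
      fP M ∈ q →
      ∃! B : Set M, (B ⊆ IM M ∧ (∀ n : ℕ, #(↥(B ∩ InM M n)) ≤ (n : Cardinal))) ∧
        typeB B ⊆ q := by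
  classical
  constructor
  · intro B hBI hBc
    have hfs := typeB_finSat hM hBI hBc
    refine ⟨hfs, ?_⟩
    obtain ⟨q, hq, hsub⟩ := exists_complete_ext _ hfs
    refine ⟨q, ⟨hq, hsub⟩, ?_⟩
    rintro y ⟨hy, hysub⟩
    exact typeB_ext_eq hM hBI hy hysub hq hsub
  · intro q hq hnonalg hfPq
    set B : Set M := {b | b ∈ IM M ∧ fRright b ∈ q} with hB
    have hBI : B ⊆ IM M := fun b hb => hb.1
    have hBc : ∀ n : ℕ, #(↥(B ∩ InM M n)) ≤ (n : Cardinal) := by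
      intro n
      by_contra hlt
      push_neg at hlt
      have hsucc : ((n + 1 : ℕ) : Cardinal) ≤ #(↥(B ∩ InM M n)) := by
        rw [Cardinal.nat_succ]
        exact Order.succ_le_of_lt hlt
      obtain ⟨S', hS'sub, hS'card⟩ := Cardinal.le_mk_iff_exists_subset.1 hsucc
      have hfin : S'.Finite := Cardinal.lt_aleph0_iff_set_finite.1
        (by rw [hS'card]; exact Cardinal.nat_lt_aleph0 _)
      have hncard : S'.ncard = n + 1 := by
        have h2 := congrArg Cardinal.toNat hS'card
        rw [Cardinal.toNat_natCast] at h2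
        exact h2
      set t : Finset M := hfin.toFinset with ht
      have htcard : t.card = n + 1 := by
        rw [Set.ncard_eq_toFinset_card S' hfin] at hncard
        exact hncard
      have htsub : ∀ b ∈ t, b ∈ B ∩ InM M n := fun b hb => hS'sub (hfin.mem_toFinset.1 hb)
      obtain ⟨a, ha⟩ := hq.1 (insert (fP M) (t.image fRright)) (by
        intro ψ hψ
        rcases Finset.mem_insert.1 (by exact_mod_cast hψ) with h | h
        · rw [h]; exact hfPq
        · obtain ⟨b, hb, he⟩ := Finset.mem_image.1 h
          rw [← he]
          exact (htsub b hb).1.2)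
      have haP := realizesAt_fP.1 (ha _ (Finset.mem_insert_self _ _))
      have hsubnb : t ⊆ nbF hM a n := by
        intro b hb
        refine (mem_nbF hM haP).2 ⟨(htsub b hb).2, realizesAt_fRright.1
          (ha _ (Finset.mem_insert_of_mem (Finset.mem_image.2 ⟨b, hb, rfl⟩)))⟩
      have hcard := Finset.card_le_card hsubnb
      rw [htcard, nbF_card hM haP n] at hcard
      omega
    have hsubq : typeB B ⊆ q := by
      intro φ hφ
      rcases typeB_cases hφ with h | ⟨p, hpP, he⟩ | ⟨b, hbB, he⟩ | ⟨b, hbIB, he⟩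
      · rw [h]; exact hfPq
      · rw [he]; exact hnonalg p
      · rw [he]; exact hbB.2
      · rw [he]
        rcases complete_or hq (fRright b) with h | h
        · exact absurd (⟨hbIB.1, h⟩ : b ∈ B) hbIB.2
        · exact h
    refine ⟨B, ⟨⟨hBI, hBc⟩, hsubq⟩, ?_⟩
    rintro B' ⟨⟨hB'I, hB'c⟩, hB'sub⟩
    ext b
    constructor
    · intro hb
      exact ⟨hB'I hb, hB'sub (mem_typeB_R hb)⟩
    · intro hb
      by_contra hbB'
      exact complete_not_both hq hb.2 (hB'sub (mem_typeB_notR ⟨hb.1, hbB'⟩))
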